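/- arXiv:2206.11725 — 7 statements merged into one kernel-verified Lean document; each statement's English description precedes it below -/
import Mathlib

section
/- Let n ≥ 1. Every monoid identity satisfied by styl_{n+1} is also satisfied by styl_n, and there exists a monoid identity that is satisfied by styl_n but not by styl_{n+1}. Hence the variety generated by styl_n is strictly contained in the variety generated by styl_{n+1}. -/
/-- The (max-plus) tropical semiring carrier: ℝ ∪ {-∞}. -/
abbrev Trop : Type := WithBot ℝ

/-- Tropical (max-plus) matrix multiplication. -/
def tmul {m : ℕ} (A B : Matrix (Fin m) (Fin m) Trop) : Matrix (Fin m) (Fin m) Trop :=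
  fun i j => Finset.univ.sup fun k => A i k + B k j

/-- The tropical identity matrix. -/
def tropId (m : ℕ) : Matrix (Fin m) (Fin m) Trop :=
  fun i j => if i = j then (0 : Trop) else ⊥

/-- Tropical matrix power. -/
def tpow {m : ℕ} (A : Matrix (Fin m) (Fin m) Trop) : ℕ → Matrix (Fin m) (Fin m) Trop
  | 0 => tropId m
  | k + 1 => tmul A (tpow A k)

/-- A matrix is upper unitriangular if its diagonal entries are 0 (the tropical one)
and its entries below the diagonal are -∞ (the tropical zero). -/
def IsUnitriangular {m : ℕ} (A : Matrix (Fin m) (Fin m) Trop) : Prop :=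
  (∀ i, A i i = 0) ∧ ∀ i j : Fin m, j < i → A i j = ⊥

/-- For a letter `x` of `𝒜_n` (represented by `x : Fin n`, standing for the letter `x.val + 1`),
`bar x` is the matrix index corresponding to `x̄ = n + 1 - (x.val + 1)`
(indices `1, …, n+1` being represented by `Fin (n+1)`, index `i` as value `i - 1`). -/
def bar {n : ℕ} (x : Fin n) : Fin (n + 1) := ⟨n - 1 - x.val, by omega⟩

/-- The image of a letter under ρ_n. -/
def letterMat {n : ℕ} (x : Fin n) : Matrix (Fin (n + 1)) (Fin (n + 1)) Trop :=
  fun i j => if i = j then (0 : Trop) else if i ≤ bar x ∧ bar x < j then (1 : Trop) else ⊥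

/-- The homomorphism ρ_n on words over 𝒜_n. -/
def rhoList {n : ℕ} : List (Fin n) → Matrix (Fin (n + 1)) (Fin (n + 1)) Trop
  | [] => tropId (n + 1)
  | x :: xs => tmul (letterMat x) (rhoList xs)

/-- The defining relations of the stylic monoid: the Knuth relations together with
idempotency of the generators. Letters of `𝒜_n` are `Fin n` with its order. -/
inductive StylRel (n : ℕ) : FreeMonoid (Fin n) → FreeMonoid (Fin n) → Prop
  | knuth₁ (a b c : Fin n) : a ≤ b → b < c →
      StylRel n (.of a * .of c * .of b) (.of c * .of a * .of b)
  | knuth₂ (a b c : Fin n) : a < b → b ≤ c →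
      StylRel n (.of b * .of a * .of c) (.of b * .of c * .of a)
  | idem (a : Fin n) : StylRel n (.of a * .of a) (.of a)

/-- The stylic congruence on 𝒜_n^*. -/
def stylCon (n : ℕ) : Con (FreeMonoid (Fin n)) := conGen (StylRel n)

/-- The stylic monoid of rank n. -/
abbrev Styl (n : ℕ) := (stylCon n).Quotient

/-- A monoid `M` satisfies the identity `u ≈ v` if every evaluation of the variables
in `M` gives `u` and `v` the same value. -/
def Satisfies (M : Type*) [Monoid M] {σ : Type*} (u v : FreeMonoid σ) : Prop :=
  ∀ φ : FreeMonoid σ →* M, φ u = φ v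

/-- `up B a` is the smallest letter of `B` strictly greater than `a`
(`none` playing the role of ε). -/
def up {n : ℕ} (B : Finset (Fin n)) (a : Fin n) : Option (Fin n) :=
  if h : (B.filter fun b => a < b).Nonempty then some ((B.filter fun b => a < b).min' h)
  else none

/-- The map δ: `δ(ε) = ε` and `δ(w·a) = δ(w) · a↑_{supp w}`. -/
def delta {n : ℕ} (w : List (Fin n)) : List (Fin n) :=
  (List.range w.length).filterMap fun i => w[i]?.bind (up (w.take i).toFinset)

/-- The "arrow" maps: `arrow w 0 i = w_i`, and
`arrow w l i = (arrow w (l-1) i)↑_{supp(δ^{l-1}(w_{≤ i}))}` (positions 0-indexed). -/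
def arrow {n : ℕ} (w : List (Fin n)) : ℕ → ℕ → Option (Fin n)
  | 0, i => w[i]?
  | k + 1, i => (arrow w k i).bind (up (delta^[k] (w.take (i + 1))).toFinset)

/-- `w` has a strictly decreasing subsequence of length `k` all of whose letters `a`
satisfy `i ≤ ā < j`. -/
def HasDecrSubseq {n : ℕ} (w : List (Fin n)) (i j : Fin (n + 1)) (k : ℕ) : Prop :=
  ∃ (s : Fin k → ℕ) (hs : ∀ l, s l < w.length),
    StrictMono s ∧
    (∀ l m : Fin k, l < m → w[s m]'(hs m) < w[s l]'(hs l)) ∧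
    ∀ l : Fin k, i ≤ bar (w[s l]'(hs l)) ∧ bar (w[s l]'(hs l)) < j

/-- The involution on words: reverse and replace each letter `a` by `n + 1 - a`. -/
def wordStar {n : ℕ} (w : List (Fin n)) : List (Fin n) :=
  w.reverse.map fun a => ⟨n - 1 - a.val, by have := a.isLt; omega⟩

/-- Skew transposition of an `(m+1) × (m+1)` tropical matrix. -/
def skewT {m : ℕ} (A : Matrix (Fin (m + 1)) (Fin (m + 1)) Trop) :
    Matrix (Fin (m + 1)) (Fin (m + 1)) Trop :=
  fun i j => A ⟨m - j.val, by omega⟩ ⟨m - i.val, by omega⟩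
namespace StylAux

open List

variable {n : ℕ}

/-- congruence on lists -/
def K (n : ℕ) (x y : List (Fin n)) : Prop :=
  stylCon n (FreeMonoid.ofList x) (FreeMonoid.ofList y)

lemma K.refl (x : List (Fin n)) : K n x x := (stylCon n).refl _

lemma K.symm {x y : List (Fin n)} (h : K n x y) : K n y x := (stylCon n).symm h

lemma K.trans {x y z : List (Fin n)} (h : K n x y) (h' : K n y z) : K n x z :=
  (stylCon n).trans h h'

lemma ofList_append (x y : List (Fin n)) :
    (FreeMonoid.ofList (x ++ y) : FreeMonoid (Fin n)) = FreeMonoid.ofList x * FreeMonoid.ofList y := rfl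

lemma K.append {x y x' y' : List (Fin n)} (h : K n x y) (h' : K n x' y') :
    K n (x ++ x') (y ++ y') := by
  unfold K at *
  rw [ofList_append, ofList_append]
  exact (stylCon n).mul h h'

lemma K.ctx (p q : List (Fin n)) {x y : List (Fin n)} (h : K n x y) :
    K n (p ++ x ++ q) (p ++ y ++ q) :=
  ((K.refl p).append h).append (K.refl q)

lemma K.ctxL (p : List (Fin n)) {x y : List (Fin n)} (h : K n x y) :
    K n (p ++ x) (p ++ y) := (K.refl p).append h

lemma K.ctxR (q : List (Fin n)) {x y : List (Fin n)} (h : K n x y) :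
    K n (x ++ q) (y ++ q) := h.append (K.refl q)

lemma triple_eq (a c b : Fin n) :
    (FreeMonoid.of a * FreeMonoid.of c * FreeMonoid.of b : FreeMonoid (Fin n)) =
      FreeMonoid.ofList [a, c, b] := rfl

lemma K.knuth1 {a b c : Fin n} (hab : a ≤ b) (hbc : b < c) : K n [a, c, b] [c, a, b] := by
  unfold K
  rw [← triple_eq, ← triple_eq]
  exact ConGen.Rel.of _ _ (StylRel.knuth₁ a b c hab hbc)

lemma K.knuth2 {a b c : Fin n} (hab : a < b) (hbc : b ≤ c) : K n [b, a, c] [b, c, a] := by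
  unfold K
  rw [← triple_eq, ← triple_eq]
  exact ConGen.Rel.of _ _ (StylRel.knuth₂ a b c hab hbc)

lemma K.idem (a : Fin n) : K n [a, a] [a] := by
  unfold K
  have : (FreeMonoid.of a * FreeMonoid.of a : FreeMonoid (Fin n)) = FreeMonoid.ofList [a, a] := rfl
  rw [← this]
  exact ConGen.Rel.of _ _ (StylRel.idem a)

end StylAux
namespace StylAux
open List
variable {n : ℕ}

lemma chain'_le_cons_of_cons {x z : Fin n} {r : List (Fin n)}
    (h : Chain' (· ≤ ·) (x :: z :: r)) (hxz : x ≤ z) : Chain' (· ≤ ·) (x :: r) := by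
  rcases r with _ | ⟨w, r'⟩
  · exact List.isChain_singleton x
  · have h1 : z ≤ w := (List.isChain_cons_cons.mp (List.isChain_cons_cons.mp h).2).1
    have h2 : Chain' (· ≤ ·) (w :: r') := (List.isChain_cons_cons.mp (List.isChain_cons_cons.mp h).2).2
    exact List.isChain_cons_cons.mpr ⟨le_trans hxz h1, h2⟩

lemma slide (t : Fin n) : ∀ (v : List (Fin n)), Chain' (· ≤ ·) v → (∀ a ∈ v, a < t) →
    K n (t :: v ++ [t]) (t :: v) := by
  intro v
  induction v with
  | nil => intro _ _; simpa using K.idem t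
  | cons x v ih =>
    intro hch hlt
    have hxt : x < t := hlt x (by simp)
    rcases v with _ | ⟨z, v'⟩
    · -- [t,x,t] ≡ [t,t,x] ≡ [t,x]
      have h1 : K n [t, x, t] [t, t, x] := K.knuth2 hxt le_rfl
      have h2 : K n [t, t, x] [t, x] := by
        have := (K.idem t).ctxR [x]
        simpa using this
      exact h1.trans h2
    · have hxz : x ≤ z := (List.isChain_cons_cons.mp hch).1
      have hzt : z < t := hlt z (by simp)
      have hk : K n [x, t, z] [t, x, z] := K.knuth1 hxz hzt
      have step1 : K n (t :: (x :: z :: v') ++ [t]) (x :: (t :: (z :: v') ++ [t])) := by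
        have := hk.symm.ctxR (v' ++ [t])
        simpa using this
      have step2 : K n (x :: (t :: (z :: v') ++ [t])) (x :: (t :: z :: v')) := by
        have := (ih (List.isChain_cons_cons.mp hch).2 (fun a ha => hlt a (by simp [ha]))).ctxL [x]
        simpa using this
      have step3 : K n (x :: t :: z :: v') (t :: x :: z :: v') := by
        have := hk.ctxR v'
        simpa using this
      exact (step1.trans step2).trans step3

lemma exists_last_descent : ∀ (v : List (Fin n)), ¬ Chain' (· ≤ ·) v →
    ∃ p y x r, v = p ++ y :: x :: r ∧ x < y ∧ Chain' (· ≤ ·) (x :: r) := by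
  intro v
  induction v with
  | nil => intro h; exact absurd List.isChain_nil h
  | cons a v ih =>
    intro h
    by_cases h' : Chain' (· ≤ ·) v
    · rcases v with _ | ⟨b, v'⟩
      · exact absurd (List.isChain_singleton a) h
      · have hab : ¬ a ≤ b := fun hle => h (List.isChain_cons_cons.mpr ⟨hle, h'⟩)
        exact ⟨[], a, b, v', rfl, not_le.mp hab, h'⟩
    · obtain ⟨p, y, x, r, hv, h1, h2⟩ := ih h'
      exact ⟨a :: p, y, x, r, by rw [hv]; rfl, h1, h2⟩

lemma inner (t : Fin n) (L : ℕ)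
    (OIH : ∀ w : List (Fin n), w.length ≤ L → (∀ a ∈ w, a ≤ t) → K n (t :: w ++ [t]) (t :: w)) :
    ∀ (r p : List (Fin n)) (y x : Fin n), (p ++ y :: x :: r).length ≤ L + 1 →
      (∀ a ∈ p ++ y :: x :: r, a ≤ t) → x < y → Chain' (· ≤ ·) (x :: r) →
      K n (t :: (p ++ y :: x :: r) ++ [t]) (t :: (p ++ y :: x :: r)) := by
  intro r
  induction r with
  | nil =>
    intro p y x hlen hle hxy _
    have hyt : y ≤ t := hle y (by simp)
    have hk : K n [y, x, t] [y, t, x] := K.knuth2 hxy hyt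
    have step1 : K n (t :: (p ++ [y, x]) ++ [t]) ((t :: (p ++ [y]) ++ [t]) ++ [x]) := by
      have := hk.ctxL (t :: p)
      simpa using this
    have step2 : K n ((t :: (p ++ [y]) ++ [t]) ++ [x]) ((t :: (p ++ [y])) ++ [x]) := by
      refine K.ctxR [x] ?_
      refine OIH (p ++ [y]) ?_ ?_
      · have := hlen; simp at this ⊢; omega
      · intro a ha; exact hle a (by simp at ha ⊢; tauto)
    have : K n (t :: (p ++ [y, x]) ++ [t]) ((t :: (p ++ [y])) ++ [x]) := step1.trans step2
    simpa using this
  | cons z r ihr =>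
    intro p y x hlen hle hxy hch
    have hxz : x ≤ z := (List.isChain_cons_cons.mp hch).1
    by_cases hyz : y ≤ z
    · -- rewrite [y,x,z] → [y,z,x]
      have hk : K n [y, x, z] [y, z, x] := K.knuth2 hxy hyz
      have hrec : K n (t :: ((p ++ [y]) ++ z :: x :: r) ++ [t]) (t :: ((p ++ [y]) ++ z :: x :: r)) := by
        refine ihr (p ++ [y]) z x ?_ ?_ (lt_of_lt_of_le hxy hyz) ?_
        · simp at hlen ⊢; omega
        · intro a ha; refine hle a ?_; simp at ha ⊢; tauto
        · exact chain'_le_cons_of_cons hch hxz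
      have e1 : K n (t :: (p ++ y :: x :: z :: r) ++ [t]) (t :: ((p ++ [y]) ++ z :: x :: r) ++ [t]) := by
        have := hk.ctx (t :: p) (r ++ [t])
        simpa using this
      have e2 : K n (t :: ((p ++ [y]) ++ z :: x :: r)) (t :: (p ++ y :: x :: z :: r)) := by
        have := hk.symm.ctx (t :: p) r
        simpa using this
      exact (e1.trans hrec).trans e2
    · -- z < y: rewrite [y,x,z] → [x,y,z]
      have hzy : z < y := not_le.mp hyz
      have hk : K n [x, y, z] [y, x, z] := K.knuth1 hxz hzy
      have hrec : K n (t :: ((p ++ [x]) ++ y :: z :: r) ++ [t]) (t :: ((p ++ [x]) ++ y :: z :: r)) := by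
        refine ihr (p ++ [x]) y z ?_ ?_ hzy ?_
        · simp at hlen ⊢; omega
        · intro a ha; refine hle a ?_; simp at ha ⊢; tauto
        · exact (List.isChain_cons_cons.mp hch).2
      have e1 : K n (t :: (p ++ y :: x :: z :: r) ++ [t]) (t :: ((p ++ [x]) ++ y :: z :: r) ++ [t]) := by
        have := hk.symm.ctx (t :: p) (r ++ [t])
        simpa using this
      have e2 : K n (t :: ((p ++ [x]) ++ y :: z :: r)) (t :: (p ++ y :: x :: z :: r)) := by
        have := hk.ctx (t :: p) r
        simpa using this
      exact (e1.trans hrec).trans e2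

lemma tvt_aux (t : Fin n) : ∀ (L : ℕ) (v : List (Fin n)), v.length ≤ L → (∀ a ∈ v, a ≤ t) →
    K n (t :: v ++ [t]) (t :: v) := by
  intro L
  induction L with
  | zero =>
    intro v hlen _
    have : v = [] := List.length_eq_zero_iff.mp (Nat.le_zero.mp hlen)
    subst this; simpa using K.idem t
  | succ L ih =>
    intro v hlen hle
    by_cases hmem : t ∈ v
    · obtain ⟨p, q, rfl⟩ := List.append_of_mem hmem
      have hp : p.length ≤ L := by simp at hlen; omega
      have hpq : (p ++ q).length ≤ L := by simp at hlen ⊢; omega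
      have h1 : K n (t :: p ++ [t]) (t :: p) :=
        ih p hp (fun a ha => hle a (by simp [ha]))
      have h2 : K n (t :: (p ++ q) ++ [t]) (t :: (p ++ q)) :=
        ih (p ++ q) hpq (fun a ha => hle a (by simp at ha ⊢; tauto))
      have s1 : K n (t :: (p ++ t :: q) ++ [t]) (t :: (p ++ q) ++ [t]) := by
        have := h1.ctxR (q ++ [t])
        simpa using this
      have s3 : K n (t :: (p ++ q)) (t :: (p ++ t :: q)) := by
        have := h1.symm.ctxR q
        simpa using this
      exact (s1.trans h2).trans s3
    · by_cases hinc : Chain' (· ≤ ·) v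
      · exact slide t v hinc (fun a ha => lt_of_le_of_ne (hle a ha) (fun h => hmem (h ▸ ha)))
      · obtain ⟨p, y, x, r, rfl, h1, h2⟩ := exists_last_descent v hinc
        exact inner t L ih r p y x hlen hle h1 h2

lemma tvt (t : Fin n) (v : List (Fin n)) (hle : ∀ a ∈ v, a ≤ t) :
    K n (t :: v ++ [t]) (t :: v) := tvt_aux t v.length v le_rfl hle

lemma tdel_aux (t : Fin n) : ∀ (L : ℕ) (v : List (Fin n)), v.length ≤ L → (∀ a ∈ v, a ≤ t) →
    K n (t :: v) (t :: v.filter (· ≠ t)) := by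
  intro L
  induction L with
  | zero =>
    intro v hlen _
    have : v = [] := List.length_eq_zero_iff.mp (Nat.le_zero.mp hlen)
    subst this; exact K.refl _
  | succ L ih =>
    intro v hlen hle
    by_cases hmem : t ∈ v
    · obtain ⟨p, q, rfl⟩ := List.append_of_mem hmem
      have s1 : K n (t :: (p ++ t :: q)) (t :: (p ++ q)) := by
        have := (tvt t p (fun a ha => hle a (by simp [ha]))).ctxR q
        simpa using this
      have hpq : (p ++ q).length ≤ L := by simp at hlen ⊢; omega
      have s2 : K n (t :: (p ++ q)) (t :: (p ++ q).filter (· ≠ t)) :=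
        ih (p ++ q) hpq (fun a ha => hle a (by simp at ha ⊢; tauto))
      have hfil : (p ++ t :: q).filter (· ≠ t) = (p ++ q).filter (· ≠ t) := by
        simp
      rw [hfil]
      exact s1.trans s2
    · have : v.filter (· ≠ t) = v := by
        refine List.filter_eq_self.mpr ?_
        intro a ha
        simp only [decide_eq_true_eq]
        intro h; exact hmem (h ▸ ha)
      rw [this]
      exact K.refl _

lemma tdel (t : Fin n) (v : List (Fin n)) (hle : ∀ a ∈ v, a ≤ t) :
    K n (t :: v) (t :: v.filter (· ≠ t)) := tdel_aux t v.length v le_rfl hle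

end StylAux
namespace StylAux
open List
variable {n : ℕ}

lemma headZ : ∀ (Z : List (Fin n)), Chain' (· > ·) Z → ∀ c ∈ Z, K n (c :: Z) Z := by
  intro Z
  induction Z with
  | nil => simp
  | cons z Z' ih =>
    intro hch c hc
    rcases List.mem_cons.mp hc with rfl | hc'
    · have := (K.idem c).ctxR Z'
      simpa using this
    · rcases Z' with _ | ⟨z₂, Z''⟩
      · simp at hc'
      · have hpw : List.Pairwise (· > ·) (z :: z₂ :: Z'') := List.isChain_iff_pairwise.mp hch
        have hcz : c < z := by
          have := hpw
          rw [List.pairwise_cons] at this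
          exact this.1 c hc'
        have hcz₂ : c ≤ z₂ := by
          have hpw' : List.Pairwise (· > ·) (z₂ :: Z'') := hpw.of_cons
          rw [List.pairwise_cons] at hpw'
          rcases List.mem_cons.mp hc' with rfl | hc'' 
          · exact le_rfl
          · exact le_of_lt (hpw'.1 c hc'')
        have hz₂z : z₂ < z := by
          have := hpw
          rw [List.pairwise_cons] at this
          exact this.1 z₂ (by simp)
        have hk : K n [c, z, z₂] [z, c, z₂] := K.knuth1 hcz₂ hz₂z
        have s1 : K n (c :: z :: z₂ :: Z'') (z :: c :: z₂ :: Z'') := by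
          have := hk.ctxR Z''
          simpa using this
        have s2 : K n (z :: c :: z₂ :: Z'') (z :: z₂ :: Z'') := by
          have := (ih (List.isChain_cons_cons.mp hch).2 c hc').ctxL [z]
          simpa using this
        exact s1.trans s2

lemma prependZ : ∀ (u Z : List (Fin n)), Chain' (· > ·) Z → (∀ a ∈ u, a ∈ Z) →
    K n (u ++ Z) Z := by
  intro u
  induction u with
  | nil => intro Z _ _; exact K.refl _
  | cons a u ih =>
    intro Z hch hmem
    have s1 : K n (a :: (u ++ Z)) (a :: Z) := by
      have := (ih Z hch (fun b hb => hmem b (by simp [hb]))).ctxL [a]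
      simpa using this
    exact s1.trans (headZ Z hch a (hmem a (by simp)))

lemma cons_sublist_split {z : Fin n} {Z' u : List (Fin n)} (h : z :: Z' <+ u) :
    ∃ u₀ v, u = u₀ ++ z :: v ∧ Z' <+ v := by
  rw [List.cons_sublist_iff] at h
  obtain ⟨r₁, r₂, rfl, hz, hZ'⟩ := h
  obtain ⟨s, s', rfl⟩ := List.append_of_mem hz
  refine ⟨s, s' ++ r₂, by simp, hZ'.trans (List.sublist_append_right _ _)⟩

lemma claimB : ∀ (Z u : List (Fin n)), Chain' (· > ·) Z → (∀ a ∈ u, a ∈ Z) → Z <+ u →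
    K n u Z := by
  intro Z
  induction Z with
  | nil =>
    intro u _ hmem _
    have : u = [] := List.eq_nil_iff_forall_not_mem.mpr (fun a ha => by simpa using hmem a ha)
    subst this; exact K.refl _
  | cons z Z' ih =>
    intro u hch hmem hsub
    obtain ⟨u₀, v, rfl, hZ'v⟩ := cons_sublist_split hsub
    have hmax : ∀ a ∈ z :: Z', a ≤ z := by
      intro a ha
      rcases List.mem_cons.mp ha with rfl | ha'
      · exact le_rfl
      · have hpw := List.isChain_iff_pairwise.mp hch
        rw [List.pairwise_cons] at hpw
        exact le_of_lt (hpw.1 a ha')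
    have hvle : ∀ a ∈ v, a ≤ z := fun a ha => hmax a (hmem a (by simp [ha]))
    have s1 : K n (z :: v) (z :: v.filter (· ≠ z)) := tdel z v hvle
    have hzZ' : z ∉ Z' := by
      intro hz
      have hpw := List.isChain_iff_pairwise.mp hch
      rw [List.pairwise_cons] at hpw
      exact lt_irrefl z (hpw.1 z hz)
    have hZ'f : Z'.filter (· ≠ z) = Z' := by
      refine List.filter_eq_self.mpr ?_
      intro a ha
      simp only [decide_eq_true_eq]
      intro h; exact hzZ' (h ▸ ha)
    have hsub' : Z' <+ v.filter (· ≠ z) := hZ'f ▸ hZ'v.filter (· ≠ z)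
    have hmem' : ∀ a ∈ v.filter (· ≠ z), a ∈ Z' := by
      intro a ha
      rw [List.mem_filter] at ha
      have h1 : a ∈ z :: Z' := hmem a (by simp [ha.1])
      have h2 : a ≠ z := by simpa using ha.2
      rcases List.mem_cons.mp h1 with rfl | h3
      · exact absurd rfl h2
      · exact h3
    have s2 : K n (v.filter (· ≠ z)) Z' := ih _ (List.isChain_cons.mp hch).2 hmem' hsub'
    have c1 : K n (u₀ ++ z :: v) (u₀ ++ z :: v.filter (· ≠ z)) := by
      have := s1.ctxL u₀
      simpa using this
    have c2 : K n (u₀ ++ z :: v.filter (· ≠ z)) (u₀ ++ z :: Z') := by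
      have := s2.ctxL (u₀ ++ [z])
      simpa using this
    have c3 : K n (u₀ ++ z :: Z') (z :: Z') :=
      prependZ u₀ (z :: Z') hch (fun a ha => hmem a (by simp [ha]))
    exact (c1.trans c2).trans c3

/-- k-fold repetition of a word, as a list. -/
def powL (w : List (Fin n)) : ℕ → List (Fin n)
  | 0 => []
  | k + 1 => w ++ powL w k

lemma mem_powL {w : List (Fin n)} {a : Fin n} : ∀ {k}, a ∈ powL w k → a ∈ w := by
  intro k
  induction k with
  | zero => intro h; simp [powL] at h
  | succ k ih =>
    intro h
    rcases List.mem_append.mp h with h | h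
    · exact h
    · exact ih h

lemma sublist_powL {w : List (Fin n)} : ∀ (k : ℕ) (l : List (Fin n)),
    (∀ a ∈ l, a ∈ w) → l.length ≤ k → l <+ powL w k := by
  intro k
  induction k with
  | zero =>
    intro l _ hlen
    have : l = [] := List.length_eq_zero_iff.mp (Nat.le_zero.mp hlen)
    subst this; exact List.nil_sublist _
  | succ k ih =>
    intro l hmem hlen
    rcases l with _ | ⟨a, l'⟩
    · exact List.nil_sublist _
    · show [a] ++ l' <+ w ++ powL w k
      refine List.Sublist.append ?_ (ih l' (fun b hb => hmem b (by simp [hb])) ?_)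
      · exact List.singleton_sublist.mpr (hmem a (by simp))
      · simpa using Nat.succ_le_succ_iff.mp hlen

/-- The strictly decreasing enumeration of the support of a word. -/
def descSupp (w : List (Fin n)) : List (Fin n) := (w.toFinset.sort (· ≤ ·)).reverse

lemma descSupp_chain (w : List (Fin n)) : Chain' (· > ·) (descSupp w) := by
  have h : (w.toFinset.sort (· ≤ ·)).Pairwise (· < ·) := w.toFinset.sortedLT_sort.pairwise
  have := List.pairwise_reverse.mpr h
  exact List.isChain_iff_pairwise.mpr (by simpa [descSupp] using this)

lemma mem_descSupp {w : List (Fin n)} {a : Fin n} : a ∈ descSupp w ↔ a ∈ w := by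
  simp [descSupp]

lemma descSupp_length_le (w : List (Fin n)) : (descSupp w).length ≤ n := by
  have : (descSupp w).length = w.toFinset.card := by simp [descSupp]
  rw [this]
  calc w.toFinset.card ≤ (Finset.univ : Finset (Fin n)).card := Finset.card_le_univ _
  _ = n := by simp

lemma pow_step (w : List (Fin n)) (k : ℕ) (hk : n ≤ k) :
    K n (powL w k) (powL w (k + 1)) := by
  have h1 : K n (powL w k) (descSupp w) := by
    refine claimB _ _ (descSupp_chain w) (fun a ha => mem_descSupp.mpr (mem_powL ha)) ?_
    exact sublist_powL k _ (fun a ha => mem_descSupp.mp ha) (le_trans (descSupp_length_le w) hk)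
  have h2 : K n (powL w (k + 1)) (descSupp w) := by
    refine claimB _ _ (descSupp_chain w) (fun a ha => mem_descSupp.mpr (mem_powL ha)) ?_
    exact sublist_powL (k+1) _ (fun a ha => mem_descSupp.mp ha)
      (le_trans (descSupp_length_le w) (le_trans hk (Nat.le_succ k)))
  exact h1.trans h2.symm

lemma ofList_powL (w : List (Fin n)) : ∀ k, (FreeMonoid.ofList w : FreeMonoid (Fin n)) ^ k =
    FreeMonoid.ofList (powL w k) := by
  intro k
  induction k with
  | zero => rfl
  | succ k ih => rw [pow_succ', ih]; rfl

lemma styl_pow_eq (g : Styl n) : g ^ n = g ^ (n + 1) := by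
  obtain ⟨x, rfl⟩ := Con.mk'_surjective g
  have hx : x = FreeMonoid.ofList (FreeMonoid.toList x) := rfl
  rw [← map_pow, ← map_pow]
  rw [Con.coe_mk', Con.eq]
  rw [hx, ofList_powL, ofList_powL]
  exact pow_step (FreeMonoid.toList x) n le_rfl

end StylAux
namespace StylAux
open List
variable {m : ℕ}

lemma sublist3 {α : Type*} {l : List α} {a b c : α} (h : l <+ [a,b,c]) :
    l = [] ∨ l = [a] ∨ l = [b] ∨ l = [c] ∨ l = [a,b] ∨ l = [a,c] ∨ l = [b,c] ∨ l = [a,b,c] := by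
  have h2 := List.mem_sublists.mpr h
  simp [List.sublists] at h2
  tauto

lemma sublist2 {α : Type*} {l : List α} {a b : α} (h : l <+ [a,b]) :
    l = [] ∨ l = [a] ∨ l = [b] ∨ l = [a,b] := by
  have h2 := List.mem_sublists.mpr h
  simp [List.sublists] at h2
  tauto

/-- `w` has a strictly decreasing subsequence of length `k`. -/
def HD (w : List (Fin m)) (k : ℕ) : Prop :=
  ∃ l, l <+ w ∧ Chain' (· > ·) l ∧ l.length = k

lemma chain_last_le_head {l : List (Fin m)} (h : Chain' (· > ·) l) :
    ∀ e ∈ l.getLast?, ∀ hd ∈ l.head?, e ≤ hd := by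
  rcases l with _ | ⟨a, l'⟩
  · simp
  · intro e he hd hhd
    simp only [List.head?_cons, Option.mem_def, Option.some.injEq] at hhd
    subst hhd
    have hpw := List.isChain_iff_pairwise.mp h
    rw [List.pairwise_cons] at hpw
    have hmem : e ∈ a :: l' := by
      have := List.getLast?_eq_getLast (l := a :: l') (by simp)
      rw [this] at he
      simp only [Option.mem_def, Option.some.injEq] at he
      subst he
      exact List.getLast_mem _
    rcases List.mem_cons.mp hmem with rfl | hmem'
    · exact le_rfl
    · exact le_of_lt (hpw.1 e hmem')

lemma HD_transfer {x y : List (Fin m)}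
    (H : ∀ l₂, l₂ <+ x → Chain' (· > ·) l₂ →
      ∃ l₂', l₂' <+ y ∧ Chain' (· > ·) l₂' ∧ l₂'.length = l₂.length ∧
        (∀ h' ∈ l₂'.head?, ∃ h ∈ l₂.head?, h' ≤ h) ∧
        (∀ e' ∈ l₂'.getLast?, ∃ e ∈ l₂.getLast?, e ≤ e'))
    (p q : List (Fin m)) (k : ℕ) (h : HD (p ++ x ++ q) k) : HD (p ++ y ++ q) k := by
  obtain ⟨l, hsub, hch, hlen⟩ := h
  rw [List.append_assoc, List.sublist_append_iff] at hsub
  obtain ⟨l₁, l₂₃, rfl, h1, h23⟩ := hsub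
  rw [List.sublist_append_iff] at h23
  obtain ⟨l₂, l₃, rfl, h2, h3⟩ := h23
  rw [show Chain' (· > ·) (l₁ ++ (l₂ ++ l₃)) ↔ _ from List.isChain_append] at hch
  obtain ⟨hch1, hch23, hlink1⟩ := hch
  rw [List.isChain_append] at hch23
  obtain ⟨hch2, hch3, hlink23⟩ := hch23
  obtain ⟨l₂', hy, hch2', hlen2, hhead, hlast⟩ := H l₂ h2 hch2
  refine ⟨l₁ ++ (l₂' ++ l₃), ?_, ?_, ?_⟩
  · rw [List.append_assoc]
    exact List.Sublist.append h1 (List.Sublist.append hy h3)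
  · rw [show Chain' (· > ·) (l₁ ++ (l₂' ++ l₃)) ↔ _ from List.isChain_append]
    refine ⟨hch1, ?_, ?_⟩
    · rw [List.isChain_append]
      refine ⟨hch2', hch3, ?_⟩
      intro e' he' yy hyy
      obtain ⟨e, he, hee'⟩ := hlast e' he'
      exact lt_of_lt_of_le (hlink23 e he yy hyy) hee'
    · intro xx hxx y' hy'
      rcases l₂' with _ | ⟨a', l₂t'⟩
      · simp only [List.nil_append] at hy'
        rcases l₂ with _ | ⟨a, l₂t⟩
        · exact hlink1 xx hxx y' (by simpa using hy')
        · have hxa : xx > a := hlink1 xx hxx a (by simp)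
          have heMem : (a :: l₂t).getLast? = some ((a :: l₂t).getLast (by simp)) :=
            List.getLast?_eq_getLast (by simp)
          have hle : (a :: l₂t).getLast (by simp) ≤ a :=
            chain_last_le_head hch2 _ (by simp [heMem]) a (by simp)
          have hgt : (a :: l₂t).getLast (by simp) > y' :=
            hlink23 _ (by simp [heMem]) y' hy'
          exact lt_trans (lt_of_lt_of_le hgt hle) hxa
      · have hy'a : a' = y' := by simpa using hy'
        subst hy'a
        obtain ⟨hh, hhm, hle⟩ := hhead a' (by simp)
        rcases l₂ with _ | ⟨a, l₂t⟩
        · simp at hhm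
        · have : a = hh := by simpa using hhm
          subst this
          exact lt_of_le_of_lt hle (hlink1 xx hxx a (by simp))
  · simp only [List.length_append] at hlen ⊢
    omega

end StylAux
namespace StylAux
open List
variable {m : ℕ}

/-- replacement hypothesis carrier -/
def Rep (x y : List (Fin m)) : Prop :=
  ∀ l₂, l₂ <+ x → Chain' (· > ·) l₂ →
    ∃ l₂', l₂' <+ y ∧ Chain' (· > ·) l₂' ∧ l₂'.length = l₂.length ∧
      (∀ h' ∈ l₂'.head?, ∃ h ∈ l₂.head?, h' ≤ h) ∧
      (∀ e' ∈ l₂'.getLast?, ∃ e ∈ l₂.getLast?, e ≤ e')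

lemma rep_same {l₂ y : List (Fin m)} (h : l₂ <+ y) (hch : Chain' (· > ·) l₂) :
    ∃ l₂', l₂' <+ y ∧ Chain' (· > ·) l₂' ∧ l₂'.length = l₂.length ∧
      (∀ h' ∈ l₂'.head?, ∃ h ∈ l₂.head?, h' ≤ h) ∧
      (∀ e' ∈ l₂'.getLast?, ∃ e ∈ l₂.getLast?, e ≤ e') :=
  ⟨l₂, h, hch, rfl, fun h' hh => ⟨h', hh, le_rfl⟩, fun e' he => ⟨e', he, le_rfl⟩⟩

lemma chain_pair {a b : Fin m} (h : Chain' (· > ·) [a, b]) : b < a := by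
  simpa using List.isChain_cons_cons.mp h |>.1

lemma rep_knuth1_fwd {a b c : Fin m} (hab : a ≤ b) (hbc : b < c) :
    Rep [a, c, b] [c, a, b] := by
  intro l₂ hsub hch
  have hac : a < c := lt_of_le_of_lt hab hbc
  rcases sublist3 hsub with rfl | rfl | rfl | rfl | rfl | rfl | rfl | rfl
  · exact rep_same (List.nil_sublist _) hch
  · exact rep_same (by simp) hch
  · exact rep_same (by simp) hch
  · exact rep_same (by simp) hch
  · exact absurd (chain_pair hch) (not_lt.mpr (le_of_lt hac))
  · exact absurd (chain_pair hch) (not_lt.mpr hab)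
  · exact rep_same ((List.sublist_cons_self a [b]).cons₂ c) hch
  · have : c < a := chain_pair (hch.sublist (by simp))
    exact absurd this (not_lt.mpr (le_of_lt hac))

lemma rep_knuth1_bwd {a b c : Fin m} (hab : a ≤ b) (hbc : b < c) :
    Rep [c, a, b] [a, c, b] := by
  intro l₂ hsub hch
  rcases sublist3 hsub with rfl | rfl | rfl | rfl | rfl | rfl | rfl | rfl
  · exact rep_same (List.nil_sublist _) hch
  · exact rep_same (by simp) hch
  · exact rep_same (by simp) hch
  · exact rep_same (by simp) hch
  · -- [c,a] ↦ [c,b]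
    refine ⟨[c, b], List.sublist_cons_self a [c, b], ?_, rfl, ?_, ?_⟩
    · exact List.isChain_cons_cons.mpr ⟨hbc, List.isChain_singleton b⟩
    · intro h' hh'
      refine ⟨c, by simp, ?_⟩
      have : c = h' := by simpa using hh'
      rw [← this]
    · intro e' he'
      refine ⟨a, by simp, ?_⟩
      have : b = e' := by simpa using he'
      rw [← this]; exact hab
  · exact rep_same (List.sublist_cons_self a [c, b]) hch
  · exact absurd (chain_pair hch) (not_lt.mpr hab)
  · have : b < a := chain_pair (hch.sublist (by simp))
    exact absurd this (not_lt.mpr hab)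

lemma rep_knuth2_fwd {a b c : Fin m} (hab : a < b) (hbc : b ≤ c) :
    Rep [b, a, c] [b, c, a] := by
  intro l₂ hsub hch
  have hac : a < c := lt_of_lt_of_le hab hbc
  rcases sublist3 hsub with rfl | rfl | rfl | rfl | rfl | rfl | rfl | rfl
  · exact rep_same (List.nil_sublist _) hch
  · exact rep_same (by simp) hch
  · exact rep_same (by simp) hch
  · exact rep_same (by simp) hch
  · exact rep_same ((List.sublist_cons_self c [a]).cons₂ b) hch
  · exact absurd (chain_pair hch) (not_lt.mpr hbc)
  · exact absurd (chain_pair hch) (not_lt.mpr (le_of_lt hac))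
  · have : c < a := chain_pair (hch.sublist (by simp))
    exact absurd this (not_lt.mpr (le_of_lt hac))

lemma rep_knuth2_bwd {a b c : Fin m} (hab : a < b) (hbc : b ≤ c) :
    Rep [b, c, a] [b, a, c] := by
  intro l₂ hsub hch
  rcases sublist3 hsub with rfl | rfl | rfl | rfl | rfl | rfl | rfl | rfl
  · exact rep_same (List.nil_sublist _) hch
  · exact rep_same (by simp) hch
  · exact rep_same (by simp) hch
  · exact rep_same (by simp) hch
  · exact absurd (chain_pair hch) (not_lt.mpr hbc)
  · -- [b,a] stays
    refine rep_same ?_ hch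
    exact ((List.nil_sublist [c]).cons₂ a).cons₂ b
  · -- [c,a] ↦ [b,a]
    refine ⟨[b, a], ((List.nil_sublist [c]).cons₂ a).cons₂ b, ?_, rfl, ?_, ?_⟩
    · exact List.isChain_cons_cons.mpr ⟨hab, List.isChain_singleton a⟩
    · intro h' hh'; refine ⟨c, by simp, ?_⟩
      have : b = h' := by simpa using hh'
      rw [← this]; exact hbc
    · intro e' he'; exact ⟨a, by simp, le_of_eq (by simpa using he')⟩
  · have : c < b := chain_pair (hch.sublist (by simp))
    exact absurd this (not_lt.mpr hbc)

lemma rep_idem_fwd (a : Fin m) : Rep [a, a] [a] := by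
  intro l₂ hsub hch
  rcases sublist2 hsub with rfl | rfl | rfl | rfl
  · exact rep_same (List.nil_sublist _) hch
  · exact rep_same (by simp) hch
  · exact rep_same (by simp) hch
  · exact absurd (chain_pair hch) (lt_irrefl a)

lemma rep_idem_bwd (a : Fin m) : Rep [a] [a, a] := by
  intro l₂ hsub hch
  exact rep_same (hsub.trans (List.sublist_cons_self a [a])) hch

/-- The invariant congruence. -/
def hdCon (m : ℕ) : Con (FreeMonoid (Fin m)) where
  r u v := ∀ p q k, HD (p ++ FreeMonoid.toList u ++ q) k ↔ HD (p ++ FreeMonoid.toList v ++ q) k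
  iseqv := ⟨fun _ _ _ _ => Iff.rfl, fun h p q k => (h p q k).symm,
      fun h h' p q k => (h p q k).trans (h' p q k)⟩
  mul' := by
    intro u v u' v' h h' p q k
    have e1 := h p (FreeMonoid.toList u' ++ q) k
    have e2 := h' (p ++ FreeMonoid.toList v) q k
    constructor
    · intro hd
      have : HD (p ++ FreeMonoid.toList u ++ (FreeMonoid.toList u' ++ q)) k := by
        simpa [List.append_assoc] using hd
      have := e1.mp this
      have : HD (p ++ FreeMonoid.toList v ++ FreeMonoid.toList u' ++ q) k := by
        simpa [List.append_assoc] using this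
      have := e2.mp (by simpa [List.append_assoc] using this)
      simpa [List.append_assoc] using this
    · intro hd
      have : HD (p ++ FreeMonoid.toList v ++ (FreeMonoid.toList v' ++ q)) k := by
        simpa [List.append_assoc] using hd
      have := e2.mpr (by simpa [List.append_assoc] using this)
      have := e1.mpr (by simpa [List.append_assoc] using this)
      simpa [List.append_assoc] using this

lemma styl_le_hdCon : stylCon m ≤ hdCon m := by
  refine Con.conGen_le.2 ?_
  rintro x y h
  cases h with
  | knuth₁ a b c hab hbc =>
    intro p q k
    exact ⟨HD_transfer (rep_knuth1_fwd hab hbc) p q k, HD_transfer (rep_knuth1_bwd hab hbc) p q k⟩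
  | knuth₂ a b c hab hbc =>
    intro p q k
    exact ⟨HD_transfer (rep_knuth2_fwd hab hbc) p q k, HD_transfer (rep_knuth2_bwd hab hbc) p q k⟩
  | idem a =>
    intro p q k
    exact ⟨HD_transfer (rep_idem_fwd a) p q k, HD_transfer (rep_idem_bwd a) p q k⟩

lemma HD_invariant {u v : FreeMonoid (Fin m)} (h : stylCon m u v) (k : ℕ) :
    HD (FreeMonoid.toList u) k ↔ HD (FreeMonoid.toList v) k := by
  have := styl_le_hdCon h [] [] k
  simpa using this

end StylAux
namespace StylAux
open List

/-- The increasing full word over `Fin (n+1)`. -/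
def incL (n : ℕ) : List (Fin (n + 1)) := List.finRange (n + 1)

lemma HD_top (n : ℕ) : HD (powL (incL n) (n + 1)) (n + 1) := by
  refine ⟨(incL n).reverse, ?_, ?_, ?_⟩
  · refine sublist_powL (n + 1) _ ?_ ?_
    · intro a ha; rw [List.mem_reverse] at ha; exact ha
    · simp [incL]
  · refine List.isChain_iff_pairwise.mpr ?_
    refine List.pairwise_reverse.mpr ?_
    simpa [incL] using List.pairwise_lt_finRange (n + 1)
  · simp [incL]

lemma HD_bound (n : ℕ) : ∀ (k : ℕ) (l : List (Fin (n + 1))),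
    l <+ powL (incL n) k → Chain' (· > ·) l → l.length ≤ k := by
  intro k
  induction k with
  | zero =>
    intro l hsub _
    have : l = [] := List.sublist_nil.mp hsub
    simp [this]
  | succ k ih =>
    intro l hsub hch
    rw [show powL (incL n) (k+1) = incL n ++ powL (incL n) k from rfl,
      List.sublist_append_iff] at hsub
    obtain ⟨l₁, l₂, rfl, h1, h2⟩ := hsub
    have hch1 : Chain' (· > ·) l₁ := hch.sublist (List.sublist_append_left _ _)
    have hch2 : Chain' (· > ·) l₂ := hch.sublist (List.sublist_append_right _ _)
    have hl1 : l₁.length ≤ 1 := by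
      rcases l₁ with _ | ⟨a, _ | ⟨b, t⟩⟩
      · simp
      · simp
      · exfalso
        have hpw : List.Pairwise (· < ·) (a :: b :: t) :=
          List.Pairwise.sublist h1 (by simpa [incL] using List.pairwise_lt_finRange (n + 1))
        have hab : a < b := (List.pairwise_cons.mp hpw).1 b (by simp)
        have hba : b < a := chain_pair (hch1.sublist (by simp))
        exact absurd hab (not_lt.mpr (le_of_lt hba))
    have := ih l₂ h2 hch2
    simp only [List.length_append]
    omega

lemma not_HD (n : ℕ) : ¬ HD (powL (incL n) n) (n + 1) := by
  rintro ⟨l, hsub, hch, hlen⟩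
  have := HD_bound n n l hsub hch
  omega

lemma not_styl_inc (n : ℕ) :
    ¬ stylCon (n + 1) (FreeMonoid.ofList (powL (incL n) n))
      (FreeMonoid.ofList (powL (incL n) (n + 1))) := by
  intro h
  have h2 := HD_invariant h (n + 1)
  rw [FreeMonoid.toList_ofList, FreeMonoid.toList_ofList] at h2
  exact not_HD n (h2.mpr (HD_top n))

/-- The embedding Styl n →* Styl (n+1). -/
def emb (n : ℕ) : Styl n →* Styl (n + 1) := by
  refine Con.lift _ ((Con.mk' _).comp (FreeMonoid.map Fin.castSucc)) ?_
  refine Con.conGen_le.2 ?_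
  rintro x y h
  rw [Con.ker_rel]
  cases h with
  | knuth₁ a b c hab hbc =>
    simp only [MonoidHom.comp_apply, map_mul, FreeMonoid.map_of]
    rw [Con.coe_mk']
    exact (Con.eq _).mpr (ConGen.Rel.of _ _ (StylRel.knuth₁ _ _ _
      (by simpa using hab) (by simpa using hbc)))
  | knuth₂ a b c hab hbc =>
    simp only [MonoidHom.comp_apply, map_mul, FreeMonoid.map_of]
    rw [Con.coe_mk']
    exact (Con.eq _).mpr (ConGen.Rel.of _ _ (StylRel.knuth₂ _ _ _
      (by simpa using hab) (by simpa using hbc)))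
  | idem a =>
    simp only [MonoidHom.comp_apply, map_mul, FreeMonoid.map_of]
    rw [Con.coe_mk']
    exact (Con.eq _).mpr (ConGen.Rel.of _ _ (StylRel.idem _))

/-- The letter-wise retraction map. -/
def dropg (n : ℕ) : Fin (n + 1) → Styl n := fun a =>
  if h : a.val < n then (stylCon n).mk' (FreeMonoid.of ⟨a.val, h⟩) else 1

/-- The retraction Styl (n+1) →* Styl n deleting the top letter. -/
def dropTop (n : ℕ) : Styl (n + 1) →* Styl n := by
  refine Con.lift _ (FreeMonoid.lift (dropg n)) ?_
  refine Con.conGen_le.2 ?_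
  rintro x y h
  rw [Con.ker_rel]
  cases h with
  | knuth₁ a b c hab hbc =>
    simp only [map_mul, FreeMonoid.lift_eval_of]
    by_cases hc : c.val < n
    · have hb : b.val < n := lt_trans hbc hc
      have ha : a.val < n := lt_of_le_of_lt hab hb
      simp only [dropg, dif_pos ha, dif_pos hb, dif_pos hc]
      rw [← map_mul, ← map_mul, ← map_mul, ← map_mul, Con.coe_mk']
      exact (Con.eq _).mpr (ConGen.Rel.of _ _ (StylRel.knuth₁ _ _ _ hab hbc))
    · have : dropg n c = 1 := by simp [dropg, hc]
      rw [this, mul_one, one_mul]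
  | knuth₂ a b c hab hbc =>
    simp only [map_mul, FreeMonoid.lift_eval_of]
    by_cases hc : c.val < n
    · have hb : b.val < n := lt_of_le_of_lt hbc hc
      have ha : a.val < n := lt_trans hab hb
      simp only [dropg, dif_pos ha, dif_pos hb, dif_pos hc]
      rw [← map_mul, ← map_mul, ← map_mul, ← map_mul, Con.coe_mk']
      exact (Con.eq _).mpr (ConGen.Rel.of _ _ (StylRel.knuth₂ _ _ _ hab hbc))
    · have : dropg n c = 1 := by simp [dropg, hc]
      rw [this, mul_one, mul_one]
  | idem a =>
    simp only [map_mul, FreeMonoid.lift_eval_of]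
    by_cases ha : a.val < n
    · simp only [dropg, dif_pos ha]
      rw [← map_mul, Con.coe_mk']
      exact (Con.eq _).mpr (ConGen.Rel.of _ _ (StylRel.idem _))
    · have : dropg n a = 1 := by simp [dropg, ha]
      rw [this, mul_one]

lemma dropTop_emb (n : ℕ) (g : Styl n) : dropTop n (emb n g) = g := by
  obtain ⟨x, rfl⟩ := Con.mk'_surjective g
  have hext : ((dropTop n).comp ((emb n).comp (Con.mk' (stylCon n)))) = Con.mk' (stylCon n) := by
    refine FreeMonoid.hom_eq ?_
    intro a
    simp only [MonoidHom.comp_apply]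
    rw [show emb n ((stylCon n).mk' (FreeMonoid.of a))
        = (stylCon (n+1)).mk' (FreeMonoid.map Fin.castSucc (FreeMonoid.of a)) from
      Con.lift_mk' _ _]
    rw [FreeMonoid.map_of]
    rw [show dropTop n ((stylCon (n+1)).mk' (FreeMonoid.of (Fin.castSucc a)))
        = FreeMonoid.lift (dropg n) (FreeMonoid.of (Fin.castSucc a)) from Con.lift_mk' _ _]
    rw [FreeMonoid.lift_eval_of]
    have ha : (Fin.castSucc a).val < n := a.isLt
    simp only [dropg, dif_pos ha]
    congr 1
  calc dropTop n (emb n ((stylCon n).mk' x))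
      = ((dropTop n).comp ((emb n).comp (Con.mk' (stylCon n)))) x := rfl
    _ = Con.mk' (stylCon n) x := by rw [hext]

end StylAux

/-- Every identity satisfied by `styl_{n+1}` is satisfied by `styl_n`, and some
identity is satisfied by `styl_n` but not by `styl_{n+1}`; hence the varieties form a strictly
increasing chain. -/
theorem styl_varieties_strictly_increasing (n : ℕ) (hn : 1 ≤ n) :
    (∀ (σ : Type) (u v : FreeMonoid σ),
      Satisfies (Styl (n + 1)) u v → Satisfies (Styl n) u v) ∧
    ∃ (σ : Type) (u v : FreeMonoid σ),
      Satisfies (Styl n) u v ∧ ¬ Satisfies (Styl (n + 1)) u v := by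
  constructor
  · intro σ u v hsat φ
    have h := hsat ((StylAux.emb n).comp φ)
    simp only [MonoidHom.comp_apply] at h
    have h2 := congrArg (StylAux.dropTop n) h
    rwa [StylAux.dropTop_emb, StylAux.dropTop_emb] at h2
  · refine ⟨Unit, (FreeMonoid.of ()) ^ n, (FreeMonoid.of ()) ^ (n + 1), ?_, ?_⟩
    · intro φ
      rw [map_pow, map_pow]
      exact StylAux.styl_pow_eq _
    · intro hs
      have h := hs (FreeMonoid.lift
        (fun _ => (stylCon (n + 1)).mk' (FreeMonoid.ofList (StylAux.incL n))))
      rw [map_pow, map_pow, FreeMonoid.lift_eval_of,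
        ← map_pow ((stylCon (n + 1)).mk') (FreeMonoid.ofList (StylAux.incL n)) n,
        ← map_pow ((stylCon (n + 1)).mk') (FreeMonoid.ofList (StylAux.incL n)) (n + 1),
        StylAux.ofList_powL, StylAux.ofList_powL, Con.coe_mk', Con.eq] at h
      exact StylAux.not_styl_inc n h
end

section
/- The stylic monoid styl_2 satisfies the identities xyxzx ≈ xyzx and (xy)² ≈ (yx)², and every monoid identity satisfied by styl_2 is a consequence of the set {xyxzx ≈ xyzx, (xy)² ≈ (yx)²}, i.e. holds in every monoid that satisfies both of these identities. In particular, styl_2 is finitely based. -/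
section StylFB

inductive M5 : Type where
  | e | a | b | ab | z
  deriving DecidableEq

instance : Fintype M5 :=
  ⟨⟨↑[M5.e, M5.a, M5.b, M5.ab, M5.z], by decide⟩, fun x => by cases x <;> decide⟩

namespace M5

def mul : M5 → M5 → M5
  | e, x => x
  | x, e => x
  | z, _ => z
  | _, z => z
  | a, a => a
  | a, b => ab
  | a, ab => ab
  | b, a => z
  | b, b => b
  | b, ab => z
  | ab, a => z
  | ab, b => ab
  | ab, ab => z

instance : Monoid M5 where
  mul := mul
  one := e
  one_mul := by decide
  mul_one := by decide
  mul_assoc := by decide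

lemma id1 : ∀ x y u : M5, x * y * x * u * x = x * y * u * x := by decide

lemma id2 : ∀ x y : M5, (x * y) ^ 2 = (y * x) ^ 2 := by
  intro x y
  rw [pow_two, pow_two]
  revert x y
  decide

end M5

section Lists
variable {σ : Type*}

/-- `Cross w x y`: some occurrence of `x` is strictly before some occurrence of `y`. -/
def Cross : List σ → σ → σ → Prop
  | [], _, _ => False
  | c :: w, x, y => (c = x ∧ y ∈ w) ∨ Cross w x y

@[simp] lemma cross_nil (x y : σ) : Cross ([] : List σ) x y ↔ False := Iff.rfl

@[simp] lemma cross_cons (c : σ) (w : List σ) (x y : σ) :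
    Cross (c :: w) x y ↔ (c = x ∧ y ∈ w) ∨ Cross w x y := Iff.rfl

lemma Cross.mem_left {w : List σ} {x y : σ} (h : Cross w x y) : x ∈ w := by
  induction w with
  | nil => exact h.elim
  | cons c w ih =>
    rcases h with ⟨rfl, _⟩ | h
    · exact List.mem_cons_self
    · exact List.mem_cons_of_mem _ (ih h)

lemma Cross.mem_right {w : List σ} {x y : σ} (h : Cross w x y) : y ∈ w := by
  induction w with
  | nil => exact h.elim
  | cons c w ih =>
    rcases h with ⟨_, hy⟩ | h
    · exact List.mem_cons_of_mem _ hy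
    · exact List.mem_cons_of_mem _ (ih h)

lemma cross_append (l₁ l₂ : List σ) (x y : σ) :
    Cross (l₁ ++ l₂) x y ↔ Cross l₁ x y ∨ (x ∈ l₁ ∧ y ∈ l₂) ∨ Cross l₂ x y := by
  induction l₁ with
  | nil => simp
  | cons c l₁ ih =>
    simp only [List.cons_append, cross_cons, ih, List.mem_append, List.mem_cons]
    tauto

lemma cross_self_iff [DecidableEq σ] (w : List σ) (x : σ) :
    Cross w x x ↔ 2 ≤ w.count x := by
  induction w with
  | nil => simp
  | cons c w ih =>
    rw [cross_cons, ih, List.count_cons]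
    simp only [beq_iff_eq]
    rcases eq_or_ne c x with rfl | hc
    · rw [if_pos rfl]
      simp only [eq_self_iff_true, true_and, ← List.count_pos_iff]
      omega
    · rw [if_neg hc]
      simp only [hc, false_and, false_or]
      omega

/-- One rewriting step. -/
inductive Step : List σ → List σ → Prop
  | del (P S : List σ) (x : σ) : x ∈ P → x ∈ S → Step (P ++ x :: S) (P ++ S)
  | swap2 (P S : List σ) (x y : σ) : x ∈ S → y ∈ S →
      Step (P ++ x :: y :: S) (P ++ y :: x :: S)
  | swap3 (P S : List σ) (x y : σ) : x ∈ P → y ∈ P →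
      Step (P ++ x :: y :: S) (P ++ y :: x :: S)

/-- A swap-only step. -/
inductive SwapStep : List σ → List σ → Prop
  | swap2 (P S : List σ) (x y : σ) : x ∈ S → y ∈ S →
      SwapStep (P ++ x :: y :: S) (P ++ y :: x :: S)
  | swap3 (P S : List σ) (x y : σ) : x ∈ P → y ∈ P →
      SwapStep (P ++ x :: y :: S) (P ++ y :: x :: S)

lemma SwapStep.symm {u v : List σ} (h : SwapStep u v) : SwapStep v u := by
  cases h with
  | swap2 P S x y hx hy => exact SwapStep.swap2 P S y x hy hx
  | swap3 P S x y hx hy => exact SwapStep.swap3 P S y x hy hx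

lemma SwapStep.step {u v : List σ} (h : SwapStep u v) : Step u v := by
  cases h with
  | swap2 P S x y hx hy => exact Step.swap2 P S x y hx hy
  | swap3 P S x y hx hy => exact Step.swap3 P S x y hx hy

lemma SwapStep.cross {u v : List σ} (h : SwapStep u v) (a c : σ) :
    Cross u a c ↔ Cross v a c := by
  have key2 : ∀ (P S : List σ) (x y : σ), x ∈ S → y ∈ S →
      (Cross (P ++ x :: y :: S) a c → Cross (P ++ y :: x :: S) a c) := by
    intro P S x y hx hy h
    rw [cross_append] at h ⊢
    simp only [cross_cons, List.mem_cons] at h ⊢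
    rcases h with h | ⟨ha, hc⟩ | ⟨rfl, (rfl | hc)⟩ | ⟨rfl, hc⟩ | h
    · exact Or.inl h
    · refine Or.inr (Or.inl ⟨ha, ?_⟩)
      rcases hc with rfl | rfl | hc
      · exact Or.inr (Or.inl rfl)
      · exact Or.inl rfl
      · exact Or.inr (Or.inr hc)
    · exact Or.inr <| Or.inr <| Or.inr <| Or.inl ⟨rfl, hy⟩
    · exact Or.inr <| Or.inr <| Or.inr <| Or.inl ⟨rfl, hc⟩
    · exact Or.inr <| Or.inr <| Or.inl ⟨rfl, Or.inr hc⟩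
    · exact Or.inr <| Or.inr <| Or.inr <| Or.inr h
  have key3 : ∀ (P S : List σ) (x y : σ), x ∈ P → y ∈ P →
      (Cross (P ++ x :: y :: S) a c → Cross (P ++ y :: x :: S) a c) := by
    intro P S x y hx hy h
    rw [cross_append] at h ⊢
    simp only [cross_cons, List.mem_cons] at h ⊢
    rcases h with h | ⟨ha, hc⟩ | ⟨rfl, (rfl | hc)⟩ | ⟨rfl, hc⟩ | h
    · exact Or.inl h
    · refine Or.inr (Or.inl ⟨ha, ?_⟩)
      rcases hc with rfl | rfl | hc
      · exact Or.inr (Or.inl rfl)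
      · exact Or.inl rfl
      · exact Or.inr (Or.inr hc)
    · exact Or.inr (Or.inl ⟨hx, Or.inl rfl⟩)
    · exact Or.inr <| Or.inr <| Or.inr <| Or.inl ⟨rfl, hc⟩
    · exact Or.inr <| Or.inr <| Or.inl ⟨rfl, Or.inr hc⟩
    · exact Or.inr <| Or.inr <| Or.inr <| Or.inr h
  cases h with
  | swap2 P S x y hx hy => exact ⟨key2 P S x y hx hy, key2 P S y x hy hx⟩
  | swap3 P S x y hx hy => exact ⟨key3 P S x y hx hy, key3 P S y x hy hx⟩
end Lists

section Lists2
variable {σ : Type*}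

/-- Chains of swap steps. -/
def RelSwap : List σ → List σ → Prop := Relation.ReflTransGen SwapStep

/-- Chains of rewriting steps. -/
def RelStar : List σ → List σ → Prop := Relation.ReflTransGen Step

lemma RelSwap.relStar {u v : List σ} (h : RelSwap u v) : RelStar u v :=
  Relation.ReflTransGen.mono (p := Step) (fun _ _ h => SwapStep.step h) _ _ h

lemma RelSwap.symm {u v : List σ} (h : RelSwap u v) : RelSwap v u := by
  induction h with
  | refl => exact Relation.ReflTransGen.refl
  | tail _ h ih => exact Relation.ReflTransGen.trans (Relation.ReflTransGen.single h.symm) ih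

lemma SwapStep.perm {u v : List σ} (h : SwapStep u v) : u.Perm v := by
  cases h with
  | swap2 P S x y _ _ => exact (List.Perm.append_left P (List.Perm.swap y x S))
  | swap3 P S x y _ _ => exact (List.Perm.append_left P (List.Perm.swap y x S))

lemma RelSwap.perm {u v : List σ} (h : RelSwap u v) : u.Perm v := by
  induction h with
  | refl => exact List.Perm.refl _
  | tail _ h ih => exact ih.trans h.perm

lemma RelSwap.cross {u v : List σ} (h : RelSwap u v) (a c : σ) :
    Cross u a c ↔ Cross v a c := by
  induction h with
  | refl => exact Iff.rfl
  | tail _ h ih => exact ih.trans (h.cross a c)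

lemma mem_of_mem_cons_ne {c x : σ} {w : List σ} (h : x ∈ c :: w) (hne : c ≠ x) : x ∈ w := by
  rcases List.mem_cons.1 h with h | h
  · exact absurd h.symm hne
  · exact h

/-- Split a list at the first occurrence of a member. -/
lemma split_first {w : List σ} {x : σ} (h : x ∈ w) :
    ∃ P S, w = P ++ x :: S ∧ x ∉ P := by
  induction w with
  | nil => cases h
  | cons c w ih =>
    by_cases hc : c = x
    · subst hc
      exact ⟨[], w, rfl, by simp⟩
    · rcases ih (mem_of_mem_cons_ne h hc) with ⟨P, S, rfl, hP⟩
      refine ⟨c :: P, S, rfl, ?_⟩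
      simp only [List.mem_cons, not_or]
      exact ⟨fun hh => hc hh.symm, hP⟩

/-- Split a list at the earlier of two (distinct) members. -/
lemma split_two {w : List σ} {x y : σ} (hx : x ∈ w) (hy : y ∈ w) (hxy : x ≠ y) :
    (∃ P S, w = P ++ x :: S ∧ y ∈ S) ∨ (∃ P S, w = P ++ y :: S ∧ x ∈ S) := by
  induction w with
  | nil => cases hx
  | cons c w ih =>
    by_cases hcx : c = x
    · subst hcx
      exact Or.inl ⟨[], w, rfl, mem_of_mem_cons_ne hy hxy⟩
    · by_cases hcy : c = y
      · subst hcy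
        exact Or.inr ⟨[], w, rfl, mem_of_mem_cons_ne hx (fun h => hcx h)⟩
      · rcases ih (mem_of_mem_cons_ne hx hcx) (mem_of_mem_cons_ne hy hcy) with
          ⟨P, S, rfl, hS⟩ | ⟨P, S, rfl, hS⟩
        · exact Or.inl ⟨c :: P, S, rfl, hS⟩
        · exact Or.inr ⟨c :: P, S, rfl, hS⟩

/-- A letter with at least two occurrences: split keeping one later occurrence. -/
lemma split_count_two [DecidableEq σ] {w : List σ} {x : σ} (h : 2 ≤ w.count x) :
    ∃ P S, w = P ++ x :: S ∧ x ∈ S := by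
  induction w with
  | nil => simp at h
  | cons c w ih =>
    by_cases hc : c = x
    · subst hc
      refine ⟨[], w, rfl, ?_⟩
      rw [List.count_cons_self] at h
      exact List.count_pos_iff.1 (by omega)
    · rw [List.count_cons_of_ne hc] at h
      rcases ih h with ⟨P, S, rfl, hS⟩
      exact ⟨c :: P, S, rfl, hS⟩

/-- A letter with at least three occurrences yields a middle occurrence. -/
lemma split_count_three [DecidableEq σ] {w : List σ} {x : σ} (h : 3 ≤ w.count x) :
    ∃ P S, w = P ++ x :: S ∧ x ∈ P ∧ x ∈ S := by
  induction w with
  | nil => simp at h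
  | cons c w ih =>
    by_cases hc : c = x
    · subst hc
      rw [List.count_cons_self] at h
      rcases split_count_two (show 2 ≤ w.count c by omega) with ⟨P, S, rfl, hS⟩
      exact ⟨c :: P, S, rfl, List.mem_cons_self, hS⟩
    · rw [List.count_cons_of_ne hc] at h
      rcases ih h with ⟨P, S, rfl, hP, hS⟩
      exact ⟨c :: P, S, rfl, List.mem_cons_of_mem _ hP, hS⟩

end Lists2

section Monoids
variable {M : Type*} [Monoid M]
  (h1 : ∀ x y z : M, x * y * x * z * x = x * y * z * x)
  (h2 : ∀ x y : M, (x * y) ^ 2 = (y * x) ^ 2)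

include h1 in
lemma H1r (a x y z t : M) : a*(x*(y*(x*(z*(x*t))))) = a*(x*(y*(z*(x*t)))) := by
  have := congrArg (fun m => a * (m * t)) (h1 x y z)
  simpa only [mul_assoc] using this

include h1 h2 in
lemma T1 (x y a b c : M) :
    x*(y*(a*(x*(b*(y*c))))) = y*(x*(a*(x*(b*(y*c))))) := by
  have s1 := congrArg (fun m => m*(b*(y*c))) (h1 x y a)
  have s2 := congrArg (fun m => x*(m*c)) (h1 y x (a*(x*b)))
  have s3 := congrArg (fun m => m*(a*(x*(b*(y*c))))) (h2 x y)
  have s4 := congrArg (fun m => m*c) (h1 y x (x*(a*(x*b))))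
  have s5 := congrArg (fun m => y*(m*(b*(y*c)))) (h1 x 1 a)
  simp only [mul_assoc, one_mul, pow_two] at s1 s2 s3 s4 s5
  exact s1.symm.trans (s2.symm.trans (s3.trans (s4.trans s5)))

include h1 h2 in
lemma T2 (x y a b c t : M) :
    a*(x*(b*(y*(c*(x*(y*t)))))) = a*(x*(b*(y*(c*(y*(x*t)))))) := by
  have s1 := congrArg (fun m => a*(x*(b*(m*t)))) (h1 y c x)
  have s2 := congrArg (fun m => a*(m*(y*t))) (h1 x (b*(y*c)) y)
  have s3 := congrArg (fun m => a*(x*(b*(y*(c*(m*t)))))) (h2 x y)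
  have s4 := congrArg (fun m => a*(m*t)) (h1 x (b*(y*(c*y))) y)
  have s5 := congrArg (fun m => a*(x*(b*(m*(x*t))))) (h1 y c 1)
  simp only [mul_assoc, one_mul, mul_one, pow_two] at s1 s2 s3 s4 s5
  exact s1.symm.trans (s2.symm.trans (s3.trans (s4.trans s5)))

variable {σ : Type*}

/-- Evaluation of a word in a monoid. -/
def evalL (η : σ → M) (l : List σ) : M := (l.map η).prod

@[simp] lemma evalL_nil (η : σ → M) : evalL η ([] : List σ) = 1 := rfl
@[simp] lemma evalL_cons (η : σ → M) (a : σ) (l : List σ) :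
    evalL η (a :: l) = η a * evalL η l := by simp [evalL]
@[simp] lemma evalL_append (η : σ → M) (l₁ l₂ : List σ) :
    evalL η (l₁ ++ l₂) = evalL η l₁ * evalL η l₂ := by simp [evalL]

include h1 h2 in
lemma step_sound {u v : List σ} (h : Step u v) (η : σ → M) :
    evalL η u = evalL η v := by
  cases h with
  | del P S x hP hS =>
    rcases List.append_of_mem hP with ⟨P₁, P₂, rfl⟩
    rcases List.append_of_mem hS with ⟨S₁, S₂, rfl⟩
    simp only [evalL_append, evalL_cons, mul_assoc]
    exact H1r h1 _ _ _ _ _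
  | swap2 P S x y hx hy =>
    by_cases hxy : x = y
    · subst hxy; rfl
    · rcases split_two hx hy hxy with ⟨S₁, S₂, rfl, hS⟩ | ⟨S₁, S₂, rfl, hS⟩
      · rcases List.append_of_mem hS with ⟨T₁, T₂, rfl⟩
        simp only [evalL_append, evalL_cons, mul_assoc]
        exact congrArg (evalL η P * ·) (T1 h1 h2 (η x) (η y) (evalL η S₁) (evalL η T₁)
          (evalL η T₂))
      · rcases List.append_of_mem hS with ⟨T₁, T₂, rfl⟩
        simp only [evalL_append, evalL_cons, mul_assoc]
        exact congrArg (evalL η P * ·) ((T1 h1 h2 (η y) (η x) (evalL η S₁) (evalL η T₁)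
          (evalL η T₂)).symm)
  | swap3 P S x y hx hy =>
    by_cases hxy : x = y
    · subst hxy; rfl
    · rcases split_two hx hy hxy with ⟨P₁, P₂, rfl, hP⟩ | ⟨P₁, P₂, rfl, hP⟩
      · rcases List.append_of_mem hP with ⟨Q₁, Q₂, rfl⟩
        simp only [evalL_append, evalL_cons, mul_assoc]
        exact T2 h1 h2 (η x) (η y) (evalL η P₁) (evalL η Q₁) (evalL η Q₂) (evalL η S)
      · rcases List.append_of_mem hP with ⟨Q₁, Q₂, rfl⟩
        simp only [evalL_append, evalL_cons, mul_assoc]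
        exact (T2 h1 h2 (η y) (η x) (evalL η P₁) (evalL η Q₁) (evalL η Q₂) (evalL η S)).symm

end Monoids

section Reduce
variable {σ : Type*} [DecidableEq σ]

lemma del_cross {P S : List σ} {x : σ} (hP : x ∈ P) (hS : x ∈ S) (a b : σ) :
    Cross (P ++ x :: S) a b ↔ Cross (P ++ S) a b := by
  simp only [cross_append, cross_cons, List.mem_cons]
  constructor
  · rintro (h | ⟨ha, (rfl | hb)⟩ | (⟨rfl, hb⟩ | h))
    · exact Or.inl h
    · exact Or.inr (Or.inl ⟨ha, hS⟩)
    · exact Or.inr (Or.inl ⟨ha, hb⟩)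
    · exact Or.inr (Or.inl ⟨hP, hb⟩)
    · exact Or.inr (Or.inr h)
  · rintro (h | ⟨ha, hb⟩ | h)
    · exact Or.inl h
    · exact Or.inr (Or.inl ⟨ha, Or.inr hb⟩)
    · exact Or.inr (Or.inr (Or.inr h))

lemma reduce_aux : ∀ (n : ℕ) (w : List σ), w.length ≤ n →
    ∃ w', RelStar w w' ∧ (∀ z, w'.count z = min (w.count z) 2) ∧
      (∀ a b, Cross w' a b ↔ Cross w a b) := by
  intro n
  induction n with
  | zero =>
    intro w hw
    rw [Nat.le_zero, List.length_eq_zero_iff] at hw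
    subst hw
    exact ⟨[], Relation.ReflTransGen.refl, fun z => by simp, fun a b => Iff.rfl⟩
  | succ n ih =>
    intro w hw
    by_cases h : ∃ x, 3 ≤ w.count x
    · rcases h with ⟨x, hx⟩
      rcases split_count_three hx with ⟨P, S, rfl, hP, hS⟩
      have hlen : (P ++ S).length ≤ n := by
        have := hw
        simp only [List.length_append, List.length_cons] at this ⊢
        omega
      rcases ih (P ++ S) hlen with ⟨w', hrel, hcnt, hcross⟩
      refine ⟨w', Relation.ReflTransGen.head (Step.del P S x hP hS) hrel, ?_, ?_⟩
      · intro z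
        rw [hcnt z]
        rcases eq_or_ne x z with rfl | hne
        · have h1 : (P ++ x :: S).count x = (P ++ S).count x + 1 := by
            simp only [List.count_append, List.count_cons_self]
            omega
          have h2 : 3 ≤ (P ++ x :: S).count x := hx
          omega
        · have h1 : (P ++ x :: S).count z = (P ++ S).count z := by
            simp [List.count_append, List.count_cons_of_ne hne]
          rw [h1]
      · intro a b
        exact (hcross a b).trans ((del_cross hP hS a b).symm)
    · push_neg at h
      exact ⟨w, Relation.ReflTransGen.refl,
        fun z => by have := h z; omega, fun a b => Iff.rfl⟩

end Reduce

section Main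
variable {σ : Type*} [DecidableEq σ]

omit [DecidableEq σ] in
lemma bubble {t : σ} {s : List σ} :
    ∀ (p c : List σ), (∀ z ∈ p, (z ∈ c ∧ t ∈ c) ∨ (z ∈ s ∧ t ∈ s)) →
    RelSwap (c ++ (p ++ t :: s)) (c ++ t :: (p ++ s)) := by
  intro p
  induction p with
  | nil => intro c _; exact Relation.ReflTransGen.refl
  | cons z p' ih =>
    intro c hcond
    have step1 : RelSwap ((c ++ [z]) ++ (p' ++ t :: s)) ((c ++ [z]) ++ t :: (p' ++ s)) := by
      refine ih (c ++ [z]) (fun z' hz' => ?_)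
      rcases hcond z' (List.mem_cons_of_mem _ hz') with ⟨h1, h2⟩ | h
      · exact Or.inl ⟨List.mem_append_left _ h1, List.mem_append_left _ h2⟩
      · exact Or.inr h
    have e1 : (c ++ [z]) ++ (p' ++ t :: s) = c ++ (z :: p' ++ t :: s) := by simp
    have e2 : (c ++ [z]) ++ t :: (p' ++ s) = c ++ z :: t :: (p' ++ s) := by simp
    rw [e1, e2] at step1
    have step2 : SwapStep (c ++ z :: t :: (p' ++ s)) (c ++ t :: z :: (p' ++ s)) := by
      rcases hcond z (List.mem_cons_self) with ⟨h1, h2⟩ | ⟨h1, h2⟩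
      · exact SwapStep.swap3 c (p' ++ s) z t h1 h2
      · exact SwapStep.swap2 c (p' ++ s) z t (List.mem_append_right _ h1)
          (List.mem_append_right _ h2)
    exact Relation.ReflTransGen.tail step1 step2

lemma main_lemma : ∀ (u v c : List σ),
    (∀ z, (c ++ u).count z ≤ 2) → (∀ z, (c ++ v).count z ≤ 2) →
    (∀ z, u.count z = v.count z) →
    (∀ a b, Cross (c ++ u) a b ↔ Cross (c ++ v) a b) →
    RelSwap (c ++ u) (c ++ v) := by
  intro u
  induction u with
  | nil =>
    intro v c _ _ hc _
    have : v = [] := by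
      apply List.eq_nil_iff_forall_not_mem.2
      intro z hz
      have := hc z
      simp only [List.count_nil] at this
      rw [← List.count_pos_iff] at hz
      omega
    subst this
    exact Relation.ReflTransGen.refl
  | cons t u' ih =>
    intro v c hcu hcv hc hx
    have htv : t ∈ v := by
      rw [← List.count_pos_iff]
      have := hc t
      simp only [List.count_cons_self] at this
      omega
    obtain ⟨p, s, rfl, hpt⟩ := split_first htv
    -- the bubbling condition
    have hcond : ∀ z ∈ p, (z ∈ c ∧ t ∈ c) ∨ (z ∈ s ∧ t ∈ s) := by
      intro z hz
      have hzt : z ≠ t := fun h => hpt (h ▸ hz)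
      have hzu' : z ∈ u' := by
        have h1 : 0 < (t :: u').count z := by
          rw [hc z, List.count_append]
          have : 0 < p.count z := List.count_pos_iff.2 hz
          omega
        rw [List.count_cons_of_ne hzt.symm] at h1
        exact List.count_pos_iff.1 h1
      by_cases htc : t ∈ c
      · left
        refine ⟨?_, htc⟩
        by_contra hzc
        have hv : Cross (c ++ (p ++ t :: s)) z t := by
          rw [cross_append]
          refine Or.inr (Or.inr ?_)
          rw [cross_append]
          exact Or.inr (Or.inl ⟨hz, List.mem_cons_self⟩)
        have hu := (hx z t).mpr hv
        have htcu : 2 ≤ (c ++ t :: u').count t := by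
          rw [List.count_append, List.count_cons_self]
          have : 0 < c.count t := List.count_pos_iff.2 htc
          omega
        have htu' : t ∉ u' := by
          have := hcu t
          intro hmem
          have h2 : 0 < u'.count t := List.count_pos_iff.2 hmem
          have h3 : 0 < c.count t := List.count_pos_iff.2 htc
          rw [List.count_append, List.count_cons_self] at this
          omega
        rw [cross_append] at hu
        rcases hu with h | ⟨h, _⟩ | h
        · exact hzc h.mem_left
        · exact hzc h
        · rw [cross_cons] at h
          rcases h with ⟨h, _⟩ | h
          · exact hzt h.symm
          · exact htu' h.mem_right
      · by_cases htu : t ∈ u'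
        · right
          have hts : t ∈ s := by
            have h1 := hc t
            have h2 : 0 < u'.count t := List.count_pos_iff.2 htu
            have h3 : p.count t = 0 := List.count_eq_zero.2 hpt
            rw [List.count_cons_self, List.count_append, List.count_cons_self, h3] at h1
            rw [← List.count_pos_iff]
            omega
          refine ⟨?_, hts⟩
          by_contra hzs
          have hu : Cross (c ++ t :: u') t z := by
            rw [cross_append, cross_cons]
            exact Or.inr (Or.inr (Or.inl ⟨rfl, hzu'⟩))
          have hv := (hx t z).mp hu
          rw [cross_append] at hv
          rcases hv with h | ⟨h, _⟩ | h
          · exact htc h.mem_left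
          · exact htc h
          · rw [cross_append] at h
            rcases h with h | ⟨h, _⟩ | h
            · exact hpt h.mem_left
            · exact hpt h
            · rw [cross_cons] at h
              rcases h with ⟨_, h⟩ | h
              · exact hzs h
              · exact hzs h.mem_right
        · exfalso
          by_cases hzs : z ∈ s
          · have hzc : z ∉ c := by
              have := hcv z
              have h1 : 0 < p.count z := List.count_pos_iff.2 hz
              have h2 : 0 < s.count z := List.count_pos_iff.2 hzs
              intro hmem
              have h3 : 0 < c.count z := List.count_pos_iff.2 hmem
              rw [List.count_append, List.count_append, List.count_cons_of_ne hzt.symm]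
                at this
              omega
            have hv : Cross (c ++ (p ++ t :: s)) z t := by
              rw [cross_append]
              refine Or.inr (Or.inr ?_)
              rw [cross_append]
              exact Or.inr (Or.inl ⟨hz, List.mem_cons_self⟩)
            have hu := (hx z t).mpr hv
            rw [cross_append] at hu
            rcases hu with h | ⟨h, _⟩ | h
            · exact hzc h.mem_left
            · exact hzc h
            · rw [cross_cons] at h
              rcases h with ⟨h, _⟩ | h
              · exact hzt h.symm
              · exact htu h.mem_right
          · have hu : Cross (c ++ t :: u') t z := by
              rw [cross_append, cross_cons]
              exact Or.inr (Or.inr (Or.inl ⟨rfl, hzu'⟩))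
            have hv := (hx t z).mp hu
            rw [cross_append] at hv
            rcases hv with h | ⟨h, _⟩ | h
            · exact htc h.mem_left
            · exact htc h
            · rw [cross_append] at h
              rcases h with h | ⟨h, _⟩ | h
              · exact hpt h.mem_left
              · exact hpt h
              · rw [cross_cons] at h
                rcases h with ⟨_, h⟩ | h
                · exact hzs h
                · exact hzs h.mem_right
    have hbub : RelSwap (c ++ (p ++ t :: s)) (c ++ t :: (p ++ s)) := bubble p c hcond
    have e1 : c ++ t :: (p ++ s) = (c ++ [t]) ++ (p ++ s) := by simp
    have e2 : c ++ t :: u' = (c ++ [t]) ++ u' := by simp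
    have hperm : ∀ z, ((c ++ [t]) ++ (p ++ s)).count z = (c ++ (p ++ t :: s)).count z := by
      intro z
      apply List.Perm.count_eq
      rw [← e1]
      exact (hbub.perm).symm
    have hih : RelSwap ((c ++ [t]) ++ u') ((c ++ [t]) ++ (p ++ s)) := by
      apply ih (p ++ s) (c ++ [t])
      · intro z
        rw [← e2]
        exact hcu z
      · intro z
        rw [hperm z]
        exact hcv z
      · intro z
        have h1 := hc z
        rcases eq_or_ne z t with rfl | hne
        · rw [List.count_cons_self, List.count_append, List.count_cons_self,
            List.count_eq_zero.2 hpt] at h1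
          rw [List.count_append, List.count_eq_zero.2 hpt]
          omega
        · rw [List.count_cons_of_ne hne.symm, List.count_append, List.count_cons_of_ne hne.symm]
            at h1
          rw [List.count_append]
          omega
      · intro a b
        rw [← e2, ← e1]
        exact (hx a b).trans (hbub.cross a b)
    rw [e2]
    exact (hih.trans (by rw [← e1]; exact hbub.symm))
end Main

namespace StylTwo

def g₀ : Fin 2 → M5 := fun x => if x = 0 then M5.a else M5.b

def lift₀ : FreeMonoid (Fin 2) →* M5 := FreeMonoid.lift g₀

lemma hker : stylCon 2 ≤ Con.ker lift₀ := by
  apply Con.conGen_le.2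
  rintro x y h
  have key1 : ∀ a b c : Fin 2, a ≤ b → b < c →
      g₀ a * g₀ c * g₀ b = g₀ c * g₀ a * g₀ b := by decide
  have key2 : ∀ a b c : Fin 2, a < b → b ≤ c →
      g₀ b * g₀ a * g₀ c = g₀ b * g₀ c * g₀ a := by decide
  have key3 : ∀ a : Fin 2, g₀ a * g₀ a = g₀ a := by decide
  cases h with
  | knuth₁ a b c hab hbc =>
    show lift₀ _ = lift₀ _
    simp only [lift₀, map_mul, FreeMonoid.lift_eval_of]
    exact key1 a b c hab hbc
  | knuth₂ a b c hab hbc =>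
    show lift₀ _ = lift₀ _
    simp only [lift₀, map_mul, FreeMonoid.lift_eval_of]
    exact key2 a b c hab hbc
  | idem a =>
    show lift₀ _ = lift₀ _
    simp only [lift₀, map_mul, FreeMonoid.lift_eval_of]
    exact key3 a

def fhom : Styl 2 →* M5 := (stylCon 2).lift lift₀ hker

/-- Canonical representative of each element. -/
def canonF : M5 → FreeMonoid (Fin 2)
  | M5.e => 1
  | M5.a => .of 0
  | M5.b => .of 1
  | M5.ab => .of 0 * .of 1
  | M5.z => .of 1 * .of 0

lemma lift₀_canonF : ∀ m : M5, lift₀ (canonF m) = m := by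
  intro m
  cases m <;> simp [canonF, lift₀, map_mul, FreeMonoid.lift_eval_of, g₀] <;> rfl

lemma rel_of {u v : FreeMonoid (Fin 2)} (h : StylRel 2 u v) : stylCon 2 u v :=
  ConGen.Rel.of _ _ h

lemma step_canon : ∀ (x : Fin 2) (m : M5), ∃ m' : M5,
    stylCon 2 (.of x * canonF m) (canonF m') := by
  have idem0 : stylCon 2 (.of 0 * .of 0) (.of 0) := rel_of (StylRel.idem 0)
  have idem1 : stylCon 2 (.of 1 * .of 1) (.of 1) := rel_of (StylRel.idem 1)
  intro x m
  fin_cases x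
  · cases m with
    | e =>
      refine ⟨M5.a, ?_⟩
      show stylCon 2 (.of 0 * 1) (.of 0)
      rw [mul_one]
      exact (stylCon 2).refl _
    | a => exact ⟨M5.a, idem0⟩
    | b => exact ⟨M5.ab, (stylCon 2).refl _⟩
    | ab =>
      refine ⟨M5.ab, ?_⟩
      show stylCon 2 (.of 0 * (.of 0 * .of 1)) (.of 0 * .of 1)
      rw [← mul_assoc]
      exact (stylCon 2).mul idem0 ((stylCon 2).refl (.of 1))
    | z =>
      refine ⟨M5.z, ?_⟩
      show stylCon 2 (.of 0 * (.of 1 * .of 0)) (.of 1 * .of 0)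
      have k : stylCon 2 (.of 0 * .of 1 * .of 0) (.of 1 * .of 0 * .of 0) :=
        rel_of (StylRel.knuth₁ 0 0 1 (le_refl _) (by decide))
      rw [← mul_assoc]
      refine (stylCon 2).trans k ?_
      rw [mul_assoc]
      exact (stylCon 2).mul ((stylCon 2).refl (.of 1)) idem0
  · cases m with
    | e =>
      refine ⟨M5.b, ?_⟩
      show stylCon 2 (.of 1 * 1) (.of 1)
      rw [mul_one]
      exact (stylCon 2).refl _
    | a => exact ⟨M5.z, (stylCon 2).refl _⟩
    | b => exact ⟨M5.b, idem1⟩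
    | ab =>
      refine ⟨M5.z, ?_⟩
      show stylCon 2 (.of 1 * (.of 0 * .of 1)) (.of 1 * .of 0)
      have k : stylCon 2 (.of 1 * .of 0 * .of 1) (.of 1 * .of 1 * .of 0) :=
        rel_of (StylRel.knuth₂ 0 1 1 (by decide) (le_refl _))
      rw [← mul_assoc]
      refine (stylCon 2).trans k ?_
      exact (stylCon 2).mul idem1 ((stylCon 2).refl (.of 0))
    | z =>
      refine ⟨M5.z, ?_⟩
      show stylCon 2 (.of 1 * (.of 1 * .of 0)) (.of 1 * .of 0)
      rw [← mul_assoc]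
      exact (stylCon 2).mul idem1 ((stylCon 2).refl (.of 0))

lemma normal_form : ∀ w : FreeMonoid (Fin 2), ∃ m : M5, stylCon 2 w (canonF m) := by
  intro w
  induction w using FreeMonoid.recOn with
  | one => exact ⟨M5.e, (stylCon 2).refl _⟩
  | of_mul x xs ihx =>
    rcases ihx with ⟨m, hm⟩
    rcases step_canon x m with ⟨m', hm'⟩
    exact ⟨m', (stylCon 2).trans
      ((stylCon 2).mul ((stylCon 2).refl (.of x)) hm) hm'⟩

lemma finj : Function.Injective fhom := by
  intro x y h
  induction x using Con.induction_on with
  | H wx =>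
    induction y using Con.induction_on with
    | H wy =>
      rcases normal_form wx with ⟨mx, hmx⟩
      rcases normal_form wy with ⟨my, hmy⟩
      have ex : (wx : Styl 2) = (canonF mx : FreeMonoid (Fin 2)) :=
        (Con.eq _).mpr hmx
      have ey : (wy : Styl 2) = (canonF my : FreeMonoid (Fin 2)) :=
        (Con.eq _).mpr hmy
      rw [ex, ey] at h ⊢
      rw [fhom, Con.lift_coe, Con.lift_coe, lift₀_canonF, lift₀_canonF] at h
      rw [h]

lemma styl_id1 : ∀ x y z : Styl 2, x * y * x * z * x = x * y * z * x := by
  intro x y z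
  apply finj
  simp only [map_mul]
  exact M5.id1 _ _ _

lemma styl_id2 : ∀ x y : Styl 2, (x * y) ^ 2 = (y * x) ^ 2 := by
  intro x y
  apply finj
  simp only [map_mul, map_pow]
  exact M5.id2 _ _

end StylTwo


section Stats
variable {σ : Type*} [DecidableEq σ]

def Fcnt : ℕ → M5 := fun n => if n = 0 then 1 else if n = 1 then M5.ab else M5.z

lemma cl1 (x : σ) (l : List σ) :
    evalL (fun z => if z = x then M5.ab else (1 : M5)) l = Fcnt (min (l.count x) 2) := by
  induction l with
  | nil => rfl
  | cons c l ih =>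
    rw [evalL_cons, ih]
    by_cases hc : c = x
    · subst hc
      rw [if_pos rfl, List.count_cons_self]
      have key : ∀ n, M5.ab * Fcnt (min n 2) = Fcnt (min (n + 1) 2) := by
        intro n
        rcases n with _ | _ | n
        · rfl
        · rfl
        · have e1 : min (n + 1 + 1) 2 = 2 := by omega
          have e2 : min (n + 1 + 1 + 1) 2 = 2 := by omega
          rw [e1, e2]
          rfl
      exact key _
    · rw [if_neg hc, one_mul, List.count_cons_of_ne hc]

lemma Fcnt_inj : ∀ m n : ℕ, m ≤ 2 → n ≤ 2 → Fcnt m = Fcnt n → m = n := by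
  intro m n hm hn h
  interval_cases m <;> interval_cases n <;> first | rfl | (exact absurd h (by decide))

variable {a b : σ}

lemma cl2_mem (hab : a ≠ b) (l : List σ) (hb : b ∈ l) :
    evalL (fun z => if z = a then M5.b else if z = b then M5.a else (1 : M5)) l = M5.a ∨
    evalL (fun z => if z = a then M5.b else if z = b then M5.a else (1 : M5)) l = M5.ab ∨
    evalL (fun z => if z = a then M5.b else if z = b then M5.a else (1 : M5)) l = M5.z := by
  induction l with
  | nil => cases hb
  | cons c l ih =>
    rw [evalL_cons]
    rcases List.mem_cons.1 hb with rfl | hbl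
    · rw [if_neg (fun h : b = a => hab h.symm), if_pos rfl]
      have key : ∀ m : M5, M5.a * m = M5.a ∨ M5.a * m = M5.ab ∨ M5.a * m = M5.z := by decide
      exact key _
    · have key : ∀ (m E : M5), (E = M5.a ∨ E = M5.ab ∨ E = M5.z) →
          (m * E = M5.a ∨ m * E = M5.ab ∨ m * E = M5.z) := by decide
      exact key _ _ (ih hbl)

lemma cl2_z (hab : a ≠ b) (l : List σ) (h : Cross l a b) :
    evalL (fun z => if z = a then M5.b else if z = b then M5.a else (1 : M5)) l = M5.z := by
  induction l with
  | nil => cases h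
  | cons c l ih =>
    rw [evalL_cons]
    rcases h with ⟨rfl, hbl⟩ | h
    · rw [if_pos rfl]
      have key : ∀ E : M5, (E = M5.a ∨ E = M5.ab ∨ E = M5.z) → M5.b * E = M5.z := by decide
      exact key _ (cl2_mem hab l hbl)
    · rw [ih h]
      have key : ∀ m : M5, m * M5.z = M5.z := by decide
      exact key _

lemma cl2_ne (hab : a ≠ b) (l : List σ) (h : ¬ Cross l a b) :
    evalL (fun z => if z = a then M5.b else if z = b then M5.a else (1 : M5)) l =
      (if b ∈ l then M5.a else 1) * (if a ∈ l then M5.b else 1) := by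
  induction l with
  | nil => simp
  | cons c l ih =>
    rw [cross_cons, not_or, not_and] at h
    obtain ⟨h1, h2⟩ := h
    rw [evalL_cons, ih h2]
    by_cases hca : c = a
    · have hbl : b ∉ l := h1 hca
      have hbcl : b ∉ c :: l := by
        rw [List.mem_cons]
        rintro (hh | hh)
        · exact hab (hh.trans hca).symm
        · exact hbl hh
      rw [if_pos hca, if_neg hbl, if_neg hbcl,
        if_pos (List.mem_cons.2 (Or.inl hca.symm))]
      by_cases hal : a ∈ l
      · rw [if_pos hal]; rfl
      · rw [if_neg hal]; rfl
    · by_cases hcb : c = b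
      · have hbcl : b ∈ c :: l := List.mem_cons.2 (Or.inl hcb.symm)
        have hacl : (a ∈ c :: l) ↔ a ∈ l := by
          rw [List.mem_cons, or_iff_right (fun hh : a = c => hca hh.symm)]
        rw [if_neg hca, if_pos hcb, if_pos hbcl]
        by_cases hal : a ∈ l
        · rw [if_pos hal, if_pos (hacl.mpr hal)]
          by_cases hbl : b ∈ l
          · rw [if_pos hbl]; rfl
          · rw [if_neg hbl]; rfl
        · rw [if_neg hal, if_neg (fun hh => hal (hacl.mp hh))]
          by_cases hbl : b ∈ l
          · rw [if_pos hbl]; rfl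
          · rw [if_neg hbl]; rfl
      · have e1 : (b ∈ c :: l) ↔ b ∈ l := by
          rw [List.mem_cons, or_iff_right (fun hh : b = c => hcb hh.symm)]
        have e2 : (a ∈ c :: l) ↔ a ∈ l := by
          rw [List.mem_cons, or_iff_right (fun hh : a = c => hca hh.symm)]
        rw [if_neg hca, if_neg hcb, one_mul, if_congr e1 rfl rfl, if_congr e2 rfl rfl]

lemma gprod_ne_z (p q : Prop) [Decidable p] [Decidable q] :
    (if p then M5.a else 1) * (if q then M5.b else 1) ≠ M5.z := by
  by_cases hp : p <;> by_cases hq : q <;> simp [hp, hq] <;> decide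

lemma cross_iff_of_eval (hab : a ≠ b) (l₁ l₂ : List σ)
    (hev : evalL (fun z => if z = a then M5.b else if z = b then M5.a else (1 : M5)) l₁ =
      evalL (fun z => if z = a then M5.b else if z = b then M5.a else (1 : M5)) l₂) :
    Cross l₁ a b ↔ Cross l₂ a b := by
  constructor
  · intro h
    by_contra h2
    have e1 := cl2_z hab l₁ h
    have e2 := cl2_ne hab l₂ h2
    rw [e1, e2] at hev
    exact gprod_ne_z _ _ hev.symm
  · intro h
    by_contra h2
    have e1 := cl2_z hab l₂ h
    have e2 := cl2_ne hab l₁ h2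
    rw [e1, e2] at hev
    exact gprod_ne_z _ _ hev

end Stats

end StylFB

/-- `styl_2` satisfies `xyxzx ≈ xyzx` and `(xy)² ≈ (yx)²`, and every identity it
satisfies holds in every monoid satisfying these two; hence `styl_2` is finitely based. -/
theorem styl_two_finitely_based :
    (∀ x y z : Styl 2, x * y * x * z * x = x * y * z * x) ∧
    (∀ x y : Styl 2, (x * y) ^ 2 = (y * x) ^ 2) ∧
    ∀ (σ : Type*) (u v : FreeMonoid σ), Satisfies (Styl 2) u v →
      ∀ (M : Type*) [Monoid M],
        (∀ x y z : M, x * y * x * z * x = x * y * z * x) →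
        (∀ x y : M, (x * y) ^ 2 = (y * x) ^ 2) → Satisfies M u v := by
  refine ⟨StylTwo.styl_id1, StylTwo.styl_id2, ?_⟩
  intro σ u v h M _inst hM1 hM2
  intro φ
  have : DecidableEq σ := Classical.decEq σ
  -- evaluations in M5 agree
  have hM5 : ∀ η : σ → M5, FreeMonoid.lift η u = FreeMonoid.lift η v := by
    intro η
    have hθ := h (FreeMonoid.lift fun z =>
      ((StylTwo.canonF (η z) : FreeMonoid (Fin 2)) : Styl 2))
    have hcomp : StylTwo.fhom.comp (FreeMonoid.lift fun z =>
        ((StylTwo.canonF (η z) : FreeMonoid (Fin 2)) : Styl 2)) = FreeMonoid.lift η := by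
      apply FreeMonoid.hom_eq
      intro x
      simp only [MonoidHom.comp_apply, FreeMonoid.lift_eval_of]
      rw [StylTwo.fhom, Con.lift_coe, StylTwo.lift₀_canonF]
    have hc := congrArg StylTwo.fhom hθ
    rw [← MonoidHom.comp_apply, ← MonoidHom.comp_apply, hcomp] at hc
    exact hc
  have hEval : ∀ η : σ → M5, evalL η (FreeMonoid.toList u) = evalL η (FreeMonoid.toList v) := by
    intro η
    have h5 := hM5 η
    rw [FreeMonoid.lift_apply, FreeMonoid.lift_apply] at h5
    exact h5
  set uL := FreeMonoid.toList u with huL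
  set vL := FreeMonoid.toList v with hvL
  have hcnt : ∀ x, min (uL.count x) 2 = min (vL.count x) 2 := by
    intro x
    apply Fcnt_inj _ _ (min_le_right _ _) (min_le_right _ _)
    rw [← cl1 x uL, ← cl1 x vL]
    exact hEval _
  have hcross : ∀ a b, Cross uL a b ↔ Cross vL a b := by
    intro a b
    rcases eq_or_ne a b with rfl | hab
    · rw [cross_self_iff, cross_self_iff]
      have := hcnt a
      omega
    · exact cross_iff_of_eval hab _ _ (hEval _)
  obtain ⟨u₀, hu₀rel, hu₀cnt, hu₀cross⟩ := reduce_aux uL.length uL le_rfl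
  obtain ⟨v₀, hv₀rel, hv₀cnt, hv₀cross⟩ := reduce_aux vL.length vL le_rfl
  have hmain : RelSwap u₀ v₀ := by
    have hm := main_lemma u₀ v₀ []
    simp only [List.nil_append] at hm
    apply hm
    · intro z
      rw [hu₀cnt z]
      omega
    · intro z
      rw [hv₀cnt z]
      omega
    · intro z
      rw [hu₀cnt z, hv₀cnt z]
      exact hcnt z
    · intro a b
      exact (hu₀cross a b).trans ((hcross a b).trans (hv₀cross a b).symm)
  set η := fun z => φ (FreeMonoid.of z) with hη
  have hsound : ∀ {l l' : List σ}, RelStar l l' → evalL η l = evalL η l' := by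
    intro l l' hrel
    induction hrel with
    | refl => rfl
    | tail _ hstep ih => exact ih.trans (step_sound hM1 hM2 hstep η)
  have h1 : evalL η uL = evalL η u₀ := hsound hu₀rel
  have h2 : evalL η u₀ = evalL η v₀ := hsound hmain.relStar
  have h3 : evalL η vL = evalL η v₀ := hsound hv₀rel
  have hphi : ∀ w : FreeMonoid σ, φ w = evalL η (FreeMonoid.toList w) := by
    intro w
    have he : φ = FreeMonoid.lift η := FreeMonoid.hom_eq (fun x => by
      rw [FreeMonoid.lift_eval_of])
    rw [he, FreeMonoid.lift_apply]
    rfl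
  rw [hphi u, hphi v]
  exact h1.trans (h2.trans h3.symm)
end

section
/- For every n ≥ 3, the word xyx (where x and y are distinct variables) is an isoterm for the equational theory of styl_n: if u is a word over the variable alphabet {x, y} such that styl_n satisfies the identity u ≈ xyx, then u = xyx. -/
namespace XyxAux

open List

abbrev V : Type := Fin 4 → Fin 5
abbrev M4 : Type := Fin 4 → Fin 4 → Fin 5

/-- capped tropical max. -/
def ta (a b : Fin 5) : Fin 5 := max a b
/-- capped tropical plus (0 = -∞, k+1 = tropical k, capped). -/
def tc (a b : Fin 5) : Fin 5 :=
  if a = 0 ∨ b = 0 then 0 else ⟨min (a.val + b.val - 1) 4, by omega⟩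

instance : Std.Associative ta := ⟨by decide⟩
instance : Std.Commutative ta := ⟨by decide⟩

lemma tc_assoc : ∀ a b c, tc (tc a b) c = tc a (tc b c) := by decide
lemma tc_ta_left : ∀ a b c, tc a (ta b c) = ta (tc a b) (tc a c) := by decide
lemma tc_ta_right : ∀ a b c, tc (ta a b) c = ta (tc a c) (tc b c) := by decide
lemma tc_one : ∀ a, tc 1 a = a := by decide
lemma le_ta_l : ∀ a b, a ≤ ta a b := by decide
lemma le_ta_r : ∀ a b, b ≤ ta a b := by decide
lemma ta_mono : ∀ a b c d : Fin 5, a ≤ c → b ≤ d → ta a b ≤ ta c d := by decide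
lemma tc_mono : ∀ a b c d : Fin 5, a ≤ c → b ≤ d → tc a b ≤ tc c d := by decide

/-- action of a matrix on a vector -/
def appM (A : M4) : Function.End V := fun φ i =>
  ta (tc (A i 0) (φ 0)) (ta (tc (A i 1) (φ 1)) (ta (tc (A i 2) (φ 2)) (tc (A i 3) (φ 3))))

/-- capped tropical matrix product -/
def mmul (A B : M4) : M4 := fun i j =>
  ta (tc (A i 0) (B 0 j)) (ta (tc (A i 1) (B 1 j)) (ta (tc (A i 2) (B 2 j)) (tc (A i 3) (B 3 j))))

lemma appM_mmul (A B : M4) (φ : V) : appM (mmul A B) φ = appM A (appM B φ) := by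
  funext i
  simp only [appM, mmul, tc_ta_left, tc_ta_right, tc_assoc]
  ac_rfl

lemma appM_mul (A B : M4) : appM A * appM B = appM (mmul A B) :=
  funext fun φ => (appM_mmul A B φ).symm

/-- capped letter matrix for the first three letters -/
def matE (a : Fin 3) : M4 := fun i j =>
  if i = j then 1 else if i.val + a.val ≤ 2 ∧ 2 < j.val + a.val then 2 else 0

lemma matKnuth₁ : ∀ a b c : Fin 3, a ≤ b → b < c →
    mmul (mmul (matE a) (matE c)) (matE b) = mmul (mmul (matE c) (matE a)) (matE b) := by decide
lemma matKnuth₂ : ∀ a b c : Fin 3, a < b → b ≤ c →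
    mmul (mmul (matE b) (matE a)) (matE c) = mmul (mmul (matE b) (matE c)) (matE a) := by decide
lemma matIdem : ∀ a : Fin 3, mmul (matE a) (matE a) = matE a := by decide

/-- letter map: first three letters act by their capped tropical matrix, others trivially -/
def gl (n : ℕ) : Fin n → Function.End V := fun a =>
  if h : a.val < 3 then appM (matE ⟨a.val, h⟩) else 1

def fE (n : ℕ) : FreeMonoid (Fin n) →* Function.End V := FreeMonoid.lift (gl n)

lemma fE_of {n : ℕ} (x : Fin n) : fE n (FreeMonoid.of x) = gl n x := rfl

lemma gl_pos {n : ℕ} (a : Fin n) (ha : a.val < 3) : gl n a = appM (matE ⟨a.val, ha⟩) :=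
  dif_pos ha

lemma gl_neg {n : ℕ} (a : Fin n) (ha : ¬ a.val < 3) : gl n a = 1 := dif_neg ha

lemma fE_styl {n : ℕ} {w w' : FreeMonoid (Fin n)} (h : stylCon n w w') : fE n w = fE n w' := by
  have hle : stylCon n ≤ Con.ker (fE n) := by
    apply (Con.conGen_le (r := StylRel n)).mpr
    intro x y hxy
    rw [Con.ker_rel]
    cases hxy with
    | knuth₁ a b c hab hbc =>
      simp only [map_mul, fE_of]
      by_cases hc : c.val < 3
      · have hb : b.val < 3 := lt_trans hbc hc
        have ha : a.val < 3 := lt_of_le_of_lt hab hb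
        rw [gl_pos a ha, gl_pos b hb, gl_pos c hc]
        simp only [appM_mul]
        exact congrArg appM (matKnuth₁ ⟨a.val, ha⟩ ⟨b.val, hb⟩ ⟨c.val, hc⟩ hab hbc)
      · rw [gl_neg c hc]
        simp only [mul_one, one_mul]
    | knuth₂ a b c hab hbc =>
      simp only [map_mul, fE_of]
      by_cases hc : c.val < 3
      · have hb : b.val < 3 := lt_of_le_of_lt hbc hc
        have ha : a.val < 3 := lt_trans hab hb
        rw [gl_pos a ha, gl_pos b hb, gl_pos c hc]
        simp only [appM_mul]
        exact congrArg appM (matKnuth₂ ⟨a.val, ha⟩ ⟨b.val, hb⟩ ⟨c.val, hc⟩ hab hbc)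
      · rw [gl_neg c hc]
        simp only [mul_one, one_mul]
    | idem a =>
      simp only [map_mul, fE_of]
      by_cases ha : a.val < 3
      · rw [gl_pos a ha]
        simp only [appM_mul]
        exact congrArg appM (matIdem _)
      · rw [gl_neg a ha, one_mul]
  exact (Con.ker_rel _).mp (hle h)

/-- evaluation of a two-letter word on a pair of endomorphisms -/
def evL (A B : Function.End V) (w : List (Fin 2)) : Function.End V :=
  (w.map fun l => if l = 0 then A else B).prod

lemma eval_list {n : ℕ} (g : Fin 2 → FreeMonoid (Fin n)) (u : FreeMonoid (Fin 2)) :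
    fE n (FreeMonoid.lift g u) = ((FreeMonoid.toList u).map fun l => fE n (g l)).prod := by
  have h1 : (fE n).comp (FreeMonoid.lift g) = FreeMonoid.lift fun l => fE n (g l) :=
    FreeMonoid.hom_eq fun x => rfl
  have h2 : fE n (FreeMonoid.lift g u) = ((fE n).comp (FreeMonoid.lift g)) u := rfl
  rw [h2, h1, FreeMonoid.lift_apply]

lemma eval_evL' {n : ℕ} (g : Fin 2 → FreeMonoid (Fin n)) (A B : Function.End V)
    (hx : fE n (g 0) = A) (hy : fE n (g 1) = B) (u : FreeMonoid (Fin 2)) :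
    fE n (FreeMonoid.lift g u) = evL A B (FreeMonoid.toList u) := by
  subst hx; subst hy
  rw [eval_list]
  exact congrArg List.prod (List.map_congr_left fun l _ => by fin_cases l <;> simp)

lemma constraint {n : ℕ} (u : FreeMonoid (Fin 2))
    (h : Satisfies (Styl n) u (.of 0 * .of 1 * .of 0)) (g : Fin 2 → FreeMonoid (Fin n)) :
    fE n (FreeMonoid.lift g u) = fE n (FreeMonoid.lift g (.of 0 * .of 1 * .of 0)) := by
  have h1 := h (((stylCon n).mk').comp (FreeMonoid.lift g))
  simp only [MonoidHom.comp_apply] at h1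
  exact fE_styl (Quotient.eq''.mp h1)

lemma constraint' {n : ℕ} (u : FreeMonoid (Fin 2))
    (h : Satisfies (Styl n) u (.of 0 * .of 1 * .of 0)) (gx gy : FreeMonoid (Fin n))
    (A B : Function.End V) (hx : fE n gx = A) (hy : fE n gy = B) :
    evL A B (FreeMonoid.toList u) = evL A B [0, 1, 0] := by
  have hc := constraint u h (fun l => if l = 0 then gx else gy)
  have e1 := eval_evL' (fun l : Fin 2 => if l = 0 then gx else gy) A B hx hy
  rw [e1, e1] at hc
  exact hc

lemma evL_cons (A B : Function.End V) (l : Fin 2) (w : List (Fin 2)) :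
    evL A B (l :: w) = (if l = 0 then A else B) * evL A B w := by
  simp [evL]

lemma evL_append (A B : Function.End V) (w₁ w₂ : List (Fin 2)) :
    evL A B (w₁ ++ w₂) = evL A B w₁ * evL A B w₂ := by
  simp [evL]

lemma evL_rep0 (A B : Function.End V) (k : ℕ) :
    evL A B (List.replicate k 0) = A ^ k := by
  simp [evL, List.map_replicate, List.prod_replicate]

lemma evL_rep1 (A B : Function.End V) (k : ℕ) :
    evL A B (List.replicate k 1) = B ^ k := by
  simp [evL, List.map_replicate, List.prod_replicate]

lemma idem_pow {A : Function.End V} (h : A * A = A) : ∀ k, A ^ (k + 1) = A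
  | 0 => pow_one A
  | k + 1 => by rw [pow_succ, idem_pow h k, h]

def bas (j : Fin 4) : V := fun k => if k = j then 1 else 0

/-- pointwise increasing -/
lemma appM_incr (A : M4) (hd : ∀ i, A i i = 1) : ∀ (φ : V) (i : Fin 4), φ i ≤ appM A φ i := by
  intro φ i
  fin_cases i
  · show φ 0 ≤ ta (tc (A 0 0) (φ 0)) (ta (tc (A 0 1) (φ 1)) (ta (tc (A 0 2) (φ 2)) (tc (A 0 3) (φ 3))))
    rw [hd 0, tc_one]; exact le_ta_l _ _
  · show φ 1 ≤ ta (tc (A 1 0) (φ 0)) (ta (tc (A 1 1) (φ 1)) (ta (tc (A 1 2) (φ 2)) (tc (A 1 3) (φ 3))))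
    rw [hd 1, tc_one]; exact le_trans (le_ta_l _ _) (le_ta_r _ _)
  · show φ 2 ≤ ta (tc (A 2 0) (φ 0)) (ta (tc (A 2 1) (φ 1)) (ta (tc (A 2 2) (φ 2)) (tc (A 2 3) (φ 3))))
    rw [hd 2, tc_one]; exact le_trans (le_ta_l _ _) (le_trans (le_ta_r _ _) (le_ta_r _ _))
  · show φ 3 ≤ ta (tc (A 3 0) (φ 0)) (ta (tc (A 3 1) (φ 1)) (ta (tc (A 3 2) (φ 2)) (tc (A 3 3) (φ 3))))
    rw [hd 3, tc_one]; exact le_trans (le_ta_r _ _) (le_trans (le_ta_r _ _) (le_ta_r _ _))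

lemma appM_mono (A : M4) : ∀ φ ψ : V, (∀ i, φ i ≤ ψ i) → ∀ i, appM A φ i ≤ appM A ψ i := by
  intro φ ψ h i
  simp only [appM]
  exact ta_mono _ _ _ _ (tc_mono _ _ _ _ le_rfl (h 0))
    (ta_mono _ _ _ _ (tc_mono _ _ _ _ le_rfl (h 1))
      (ta_mono _ _ _ _ (tc_mono _ _ _ _ le_rfl (h 2)) (tc_mono _ _ _ _ le_rfl (h 3))))

lemma evL_mono (A B : Function.End V)
    (hAi : ∀ (φ : V) (i : Fin 4), φ i ≤ A φ i) (hBi : ∀ (φ : V) (i : Fin 4), φ i ≤ B φ i)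
    (hAm : ∀ φ ψ : V, (∀ i, φ i ≤ ψ i) → ∀ i, A φ i ≤ A ψ i)
    (hBm : ∀ φ ψ : V, (∀ i, φ i ≤ ψ i) → ∀ i, B φ i ≤ B ψ i) :
    ∀ {s t : List (Fin 2)}, s <+ t → ∀ (φ : V) (i : Fin 4), evL A B s φ i ≤ evL A B t φ i := by
  intro s t h
  induction h with
  | slnil => intro φ i; exact le_refl _
  | @cons s t l h ih =>
    intro φ i
    rw [evL_cons]
    refine le_trans (ih φ i) ?_
    by_cases hl : l = 0
    · rw [if_pos hl]; exact hAi (evL A B t φ) i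
    · rw [if_neg hl]; exact hBi (evL A B t φ) i
  | @cons_cons s t l h ih =>
    intro φ i
    rw [evL_cons, evL_cons]
    by_cases hl : l = 0
    · rw [if_pos hl]; exact hAm _ _ (fun j => ih φ j) i
    · rw [if_neg hl]; exact hBm _ _ (fun j => ih φ j) i

/- ### combinatorics of two-letter words -/

lemma all_ones : ∀ w : List (Fin 2), ¬ ([0] <+ w) → w = List.replicate w.length 1 := by
  intro w
  induction w with
  | nil => intro _; rfl
  | cons l t ih =>
    intro h
    fin_cases l
    · exact absurd (List.singleton_sublist.mpr List.mem_cons_self) h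
    · have ht := ih (fun hs => h (hs.cons _))
      show (1 : Fin 2) :: t = List.replicate ((1 : Fin 2) :: t).length 1
      rw [List.length_cons, List.replicate_succ, ← ht]

lemma no10 : ∀ w : List (Fin 2), ¬ ([1, 0] <+ w) →
    ∃ a q, w = List.replicate a 0 ++ List.replicate q 1 := by
  intro w
  induction w with
  | nil => intro _; exact ⟨0, 0, rfl⟩
  | cons l t ih =>
    intro h
    fin_cases l
    · obtain ⟨a, q, ht⟩ := ih (fun hs => h (hs.cons _))
      exact ⟨a + 1, q, by rw [List.replicate_succ, List.cons_append, ← ht]; rfl⟩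
    · have h0 : ¬ ([0] <+ t) := fun hs => h (hs.cons₂ _)
      refine ⟨0, t.length + 1, ?_⟩
      show (1 : Fin 2) :: t = List.replicate 0 0 ++ List.replicate (t.length + 1) 1
      rw [List.replicate_zero, List.nil_append, List.replicate_succ, ← all_ones t h0]

lemma no010 : ∀ w : List (Fin 2), ¬ ([0, 1, 0] <+ w) →
    ∃ p a q, w = List.replicate p 1 ++ (List.replicate a 0 ++ List.replicate q 1) := by
  intro w
  induction w with
  | nil => intro _; exact ⟨0, 0, 0, rfl⟩
  | cons l t ih =>
    intro h
    fin_cases l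
    · have h10 : ¬ ([1, 0] <+ t) := fun hs => h (hs.cons₂ _)
      obtain ⟨a, q, ht⟩ := no10 t h10
      refine ⟨0, a + 1, q, ?_⟩
      rw [List.replicate_zero, List.nil_append, List.replicate_succ, List.cons_append, ← ht]; rfl
    · obtain ⟨p, a, q, ht⟩ := ih (fun hs => h (hs.cons _))
      exact ⟨p + 1, a, q, by rw [List.replicate_succ, List.cons_append, ← ht]; rfl⟩

lemma sublist_step : ∀ {s t : List (Fin 2)}, s <+ t → s ≠ t →
    ∃ m, s <+ m ∧ m <+ t ∧ m.length = s.length + 1 := by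
  intro s t h
  induction h with
  | slnil => intro hne; exact absurd rfl hne
  | @cons l₁ l₂ a h ih =>
    intro _
    by_cases he : l₁ = l₂
    · subst he
      exact ⟨a :: l₁, (List.Sublist.refl l₁).cons a, List.Sublist.refl _, by simp⟩
    · obtain ⟨m, h1, h2, h3⟩ := ih he
      exact ⟨m, h1, h2.cons a, h3⟩
  | @cons_cons l₁ l₂ a h ih =>
    intro hne
    have hne' : l₁ ≠ l₂ := fun he => hne (by rw [he])
    obtain ⟨m, h1, h2, h3⟩ := ih hne'
    exact ⟨a :: m, h1.cons₂ a, h2.cons₂ a, by simp [h3]⟩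

lemma pat4 : ∀ m : List (Fin 2), m.length = 4 → [0, 1, 0] <+ m →
    m = [0, 0, 1, 0] ∨ m = [0, 1, 0, 0] ∨ m = [1, 0, 1, 0] ∨ m = [0, 1, 1, 0] ∨
      m = [0, 1, 0, 1] := by
  intro m hlen
  rcases m with _ | ⟨a, m⟩; · simp at hlen
  rcases m with _ | ⟨b, m⟩; · simp at hlen
  rcases m with _ | ⟨c, m⟩; · simp at hlen
  rcases m with _ | ⟨d, m⟩; · simp at hlen
  rcases m with _ | ⟨e, m⟩
  · clear hlen; revert a b c d; decide
  · simp at hlen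

end XyxAux

namespace XyxAux

open List

def mA0 : M4 := matE 1
def mA1 : M4 := mmul (matE 2) (matE 0)
def mB0 : M4 := mmul (matE 0) (matE 1)
def mB1 : M4 := mmul (matE 1) (matE 2)
def mC0 : M4 := mmul (matE 1) (matE 2)
def mC1 : M4 := matE 0

lemma main {n : ℕ} (hn : 3 ≤ n) (u : FreeMonoid (Fin 2))
    (h : Satisfies (Styl n) u (.of 0 * .of 1 * .of 0)) :
    FreeMonoid.toList u = [0, 1, 0] := by
  have HA := constraint' u h (.of ⟨1, by omega⟩) (.of ⟨2, by omega⟩ * .of ⟨0, by omega⟩)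
      (appM mA0) (appM mA1) rfl (appM_mul _ _)
  have HB := constraint' u h (.of ⟨0, by omega⟩ * .of ⟨1, by omega⟩)
      (.of ⟨1, by omega⟩ * .of ⟨2, by omega⟩)
      (appM mB0) (appM mB1) (appM_mul _ _) (appM_mul _ _)
  have HC := constraint' u h (.of ⟨1, by omega⟩ * .of ⟨2, by omega⟩) (.of ⟨0, by omega⟩)
      (appM mC0) (appM mC1) (appM_mul _ _) rfl
  by_cases h010 : [0, 1, 0] <+ FreeMonoid.toList u
  · by_cases heq : FreeMonoid.toList u = [0, 1, 0]
    · exact heq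
    · exfalso
      obtain ⟨m, hm1, hm2, hm3⟩ := sublist_step h010 (fun e => heq e.symm)
      have hB := evL_mono (appM mB0) (appM mB1) (appM_incr _ (by decide))
        (appM_incr _ (by decide)) (appM_mono _) (appM_mono _) hm2
      have hC := evL_mono (appM mC0) (appM mC1) (appM_incr _ (by decide))
        (appM_incr _ (by decide)) (appM_mono _) (appM_mono _) hm2
      rcases pat4 m hm3 hm1 with rfl | rfl | rfl | rfl | rfl
      · have hx := hC (bas 3) 0; rw [HC] at hx; exact absurd hx (by decide)
      · have hx := hB (bas 3) 0; rw [HB] at hx; exact absurd hx (by decide)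
      · have hx := hB (bas 3) 0; rw [HB] at hx; exact absurd hx (by decide)
      · have hx := hB (bas 3) 0; rw [HB] at hx; exact absurd hx (by decide)
      · have hx := hC (bas 3) 0; rw [HC] at hx; exact absurd hx (by decide)
  · exfalso
    obtain ⟨p, a, q, hw⟩ := no010 _ h010
    rw [hw, evL_append, evL_append, evL_rep1, evL_rep0, evL_rep1] at HA
    have idX : appM mA0 * appM mA0 = appM mA0 := by
      rw [appM_mul]; exact congrArg appM (by decide)
    have idY : appM mA1 * appM mA1 = appM mA1 := by
      rw [appM_mul]; exact congrArg appM (by decide)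
    rcases p with _ | p <;> rcases a with _ | a <;> rcases q with _ | q <;>
      simp only [pow_zero, idem_pow idX, idem_pow idY, one_mul, mul_one, idX, idY] at HA
    · exact absurd (congrFun (congrFun HA (bas 1)) 0) (by decide)
    · exact absurd (congrFun (congrFun HA (bas 2)) 0) (by decide)
    · exact absurd (congrFun (congrFun HA (bas 1)) 0) (by decide)
    · exact absurd (congrFun (congrFun HA (bas 2)) 0) (by decide)
    · exact absurd (congrFun (congrFun HA (bas 2)) 0) (by decide)
    · exact absurd (congrFun (congrFun HA (bas 2)) 0) (by decide)
    · exact absurd (congrFun (congrFun HA (bas 3)) 1) (by decide)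
    · exact absurd (congrFun (congrFun HA (bas 3)) 0) (by decide)

end XyxAux

/-- For `n ≥ 3`, the word `xyx` is an isoterm for `styl_n`: any word `u` over the
two variables `x = 0`, `y = 1` such that `styl_n` satisfies `u ≈ xyx` equals `xyx`. -/
theorem xyx_isoterm (n : ℕ) (hn : 3 ≤ n) (u : FreeMonoid (Fin 2))
    (h : Satisfies (Styl n) u (.of 0 * .of 1 * .of 0)) :
    u = .of 0 * .of 1 * .of 0 := by
  exact FreeMonoid.toList.injective (XyxAux.main hn u h)
end

section
/- For every n ∈ ℕ, the stylic monoid styl_{n+2} does not satisfy the identity (xy)^{n+1} ≈ (xy)^n yx: there exists a monoid homomorphism φ from the free monoid on two variables x, y into styl_{n+2} such that φ((xy)^{n+1}) ≠ φ((xy)^n yx). -/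
abbrev V : Type := WithBot ℕ

lemma V.sup_add_right (c : V) {ι : Type} (s : Finset ι) (f : ι → V) :
    s.sup f + c = s.sup fun x => f x + c := by
  refine Finset.comp_sup_eq_sup_comp (· + c) (fun x y => ?_) (by simp)
  rcases le_total x y with h | h
  · rw [sup_of_le_right h, sup_of_le_right (add_le_add_left h c)]
  · rw [sup_of_le_left h, sup_of_le_left (add_le_add_left h c)]

lemma V.add_sup_left (c : V) {ι : Type} (s : Finset ι) (f : ι → V) :
    c + s.sup f = s.sup fun x => c + f x := by
  refine Finset.comp_sup_eq_sup_comp (c + ·) (fun x y => ?_) (by simp)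
  rcases le_total x y with h | h
  · rw [sup_of_le_right h, sup_of_le_right (add_le_add_right h c)]
  · rw [sup_of_le_left h, sup_of_le_left (add_le_add_right h c)]

/-- Max-plus (tropical) square matrices over `WithBot ℕ`, as a monoid. -/
structure TM (m : ℕ) where
  f : Fin m → Fin m → V

namespace TM

variable {m : ℕ}

lemma ext' {A B : TM m} (h : A.f = B.f) : A = B := by cases A; cases B; simpa using h

instance : Monoid (TM m) where
  mul A B := ⟨fun i j => Finset.univ.sup fun k => A.f i k + B.f k j⟩
  one := ⟨fun i j => if i = j then 0 else ⊥⟩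
  mul_assoc A B C := by
    apply ext'
    funext i j
    show (Finset.univ.sup fun k => (Finset.univ.sup fun l => A.f i l + B.f l k) + C.f k j)
       = Finset.univ.sup fun l => A.f i l + Finset.univ.sup fun k => B.f l k + C.f k j
    calc (Finset.univ.sup fun k => (Finset.univ.sup fun l => A.f i l + B.f l k) + C.f k j)
        = Finset.univ.sup fun k => Finset.univ.sup fun l => A.f i l + B.f l k + C.f k j := by
          refine Finset.sup_congr rfl fun k _ => ?_
          rw [V.sup_add_right]
      _ = Finset.univ.sup fun l => Finset.univ.sup fun k => A.f i l + B.f l k + C.f k j :=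
          Finset.sup_comm _ _ _
      _ = Finset.univ.sup fun l => A.f i l + Finset.univ.sup fun k => B.f l k + C.f k j := by
          refine Finset.sup_congr rfl fun l _ => ?_
          rw [V.add_sup_left]
          simp only [add_assoc]
  one_mul A := by
    apply ext'
    funext i j
    show (Finset.univ.sup fun k => (if i = k then (0:V) else ⊥) + A.f k j) = A.f i j
    apply le_antisymm
    · refine Finset.sup_le fun k _ => ?_
      by_cases h : i = k
      · subst h; simp
      · simp [h]
    · have := Finset.le_sup (f := fun k => (if i = k then (0:V) else ⊥) + A.f k j)
        (Finset.mem_univ i)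
      simpa using this
  mul_one A := by
    apply ext'
    funext i j
    show (Finset.univ.sup fun k => A.f i k + if k = j then (0:V) else ⊥) = A.f i j
    apply le_antisymm
    · refine Finset.sup_le fun k _ => ?_
      by_cases h : k = j
      · subst h; simp
      · simp [h]
    · have := Finset.le_sup (f := fun k => A.f i k + if k = j then (0:V) else ⊥)
        (Finset.mem_univ j)
      simpa using this

lemma mul_f (A B : TM m) (i j : Fin m) :
    (A * B).f i j = Finset.univ.sup fun k => A.f i k + B.f k j := rfl

lemma one_f (i j : Fin m) : (1 : TM m).f i j = if i = j then (0:V) else ⊥ := rfl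

/-- The matrix of a letter with "bar value" `b`. -/
def Lm (b : Fin m) : Fin m → Fin m → V := fun i j =>
  if (i:ℕ) ≤ j then (if (i:ℕ) ≤ b ∧ (b:ℕ) < j then 1 else 0) else ⊥

/-- Bot below the diagonal, rows monotone. -/
def Good (A : Fin m → Fin m → V) : Prop :=
  (∀ i j : Fin m, (j:ℕ) < i → A i j = ⊥) ∧ ∀ i j k : Fin m, (j:ℕ) ≤ k → A i j ≤ A i k

lemma good_Lm (b : Fin m) : Good (Lm b) := by
  constructor
  · intro i j h; simp only [Lm]; rw [if_neg (by omega)]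
  · intro i j k h
    simp only [Lm]
    split_ifs <;> first | exact le_refl _ | exact bot_le | (exfalso; omega) | decide

/-- The effect of right-multiplying a good matrix by a letter matrix. -/
def step (A : Fin m → Fin m → V) (b : Fin m) : Fin m → Fin m → V :=
  fun i j => if (b:ℕ) < j then A i j ⊔ (A i b + 1) else A i j

lemma good_step {A : Fin m → Fin m → V} (hA : Good A) (b : Fin m) : Good (step A b) := by
  obtain ⟨h1, h2⟩ := hA
  constructor
  · intro i j h
    simp only [step]
    have hij : A i j = ⊥ := h1 i j h
    split_ifs with hb
    · have : A i b = ⊥ := h1 i b (by omega)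
      simp [hij, this]
    · exact hij
  · intro i j k h
    simp only [step]
    split_ifs with hb hb' hb'
    · exact sup_le_sup_right (h2 i j k h) _
    · omega
    · exact le_trans (h2 i j k h) le_sup_left
    · exact h2 i j k h

lemma mul_Lm (A : TM m) (hA : Good A.f) (b : Fin m) :
    (A * ⟨Lm b⟩).f = step A.f b := by
  obtain ⟨h1, h2⟩ := hA
  funext i j
  rw [mul_f]
  show (Finset.univ.sup fun k => A.f i k + Lm b k j) = step A.f b i j
  apply le_antisymm
  · refine Finset.sup_le fun k _ => ?_
    simp only [Lm, step]
    by_cases hkj : (k:ℕ) ≤ j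
    · rw [if_pos hkj]
      by_cases hkb : (k:ℕ) ≤ b ∧ (b:ℕ) < j
      · rw [if_pos hkb, if_pos hkb.2]
        exact le_trans (add_le_add_left (h2 i k b hkb.1) 1) le_sup_right
      · rw [if_neg hkb, add_zero]
        have : A.f i k ≤ A.f i j := h2 i k j hkj
        split_ifs with h
        · exact le_trans this le_sup_left
        · exact this
    · rw [if_neg hkj]
      simp
  · simp only [step]
    have termj : A.f i j + Lm b j j ≤ Finset.univ.sup fun k => A.f i k + Lm b k j :=
      Finset.le_sup (f := fun k => A.f i k + Lm b k j) (Finset.mem_univ j)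
    have hLjj : Lm b j j = 0 := by simp only [Lm]; rw [if_pos (le_refl _), if_neg (by omega)]
    rw [hLjj, add_zero] at termj
    split_ifs with hb
    · refine sup_le termj ?_
      have termb : A.f i b + Lm b b j ≤ Finset.univ.sup fun k => A.f i k + Lm b k j :=
        Finset.le_sup (f := fun k => A.f i k + Lm b k j) (Finset.mem_univ b)
      have hLbj : Lm b b j = 1 := by
        simp only [Lm]; rw [if_pos (by omega), if_pos ⟨le_refl _, hb⟩]
      rwa [hLbj] at termb
    · exact termj

end TM

namespace TM
variable {m : ℕ}

lemma key_idem (b : Fin m) : step (Lm b) b = Lm b := by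
  funext i j
  simp only [step, Lm]
  split_ifs <;> first | rfl | (exfalso; omega) | decide

set_option maxHeartbeats 4000000 in
lemma key1 (p q r : Fin m) (h1 : (r:ℕ) < q) (h2 : (q:ℕ) ≤ p) :
    step (step (Lm p) r) q = step (step (Lm r) p) q := by
  funext i j
  simp only [step, Lm]
  split_ifs <;> first | rfl | (exfalso; omega) | decide

set_option maxHeartbeats 4000000 in
lemma key2 (p q r : Fin m) (h1 : (r:ℕ) ≤ q) (h2 : (q:ℕ) < p) :
    step (step (Lm q) p) r = step (step (Lm q) r) p := by
  funext i j
  simp only [step, Lm]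
  split_ifs <;> first | rfl | (exfalso; omega) | decide

end TM

lemma List.range'_concat' (s n : ℕ) : List.range' s (n+1) = List.range' s n ++ [s+n] := by
  have := List.range'_append (s := s) (m := n) (n := 1) (step := 1)
  simp only [List.range'_one, one_mul] at this
  exact this.symm

section Styl16

open TM

variable (n : ℕ)

/-- letter `t` of the alphabet `Fin (n+2)` (truncated). -/
def ltr (t : ℕ) : Fin (n+2) := ⟨min t (n+1), by omega⟩

/-- bar value of a letter, as an index in `Fin (n+3)`. -/
def bv (x : Fin (n+2)) : Fin (n+3) := ⟨n+1-x.val, by omega⟩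

/-- The representation. -/
def ψ : FreeMonoid (Fin (n+2)) →* TM (n+3) := FreeMonoid.lift fun x => ⟨Lm (bv n x)⟩

/-- ascending word `a, a+1, ..., a+len-1`. -/
def asc (a len : ℕ) : List (Fin (n+2)) := (List.range' a len).map (ltr n)

/-- closed form for the matrix of an ascending word. -/
def SegF (a len : ℕ) : Fin (n+3) → Fin (n+3) → V := fun i j =>
  if (i:ℕ) ≤ j then (if (i:ℕ) < j ∧ (i:ℕ) ≤ n+1-a ∧ n+2-a-len < (j:ℕ) then 1 else 0) else ⊥

lemma good_SegF (a len : ℕ) : Good (SegF n a len) := by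
  constructor
  · intro i j h; simp only [SegF]; rw [if_neg (by omega)]
  · intro i j k h
    simp only [SegF]
    split_ifs <;> first | exact le_refl _ | exact bot_le | (exfalso; omega) | decide

lemma psi_asc : ∀ len a, 1 ≤ len → a + len ≤ n+2 →
    (ψ n (FreeMonoid.ofList (asc n a len))).f = SegF n a len := by
  intro len
  induction len with
  | zero => intro a h; omega
  | succ len ih =>
    intro a _ hlen
    rcases Nat.eq_zero_or_pos len with h0 | hpos
    · subst h0
      have h1 : asc n a (0+1) = [ltr n a] := by
        simp [asc, List.range'_one]
      rw [h1, FreeMonoid.ofList_singleton]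
      rw [show ψ n (FreeMonoid.of (ltr n a)) = ⟨Lm (bv n (ltr n a))⟩ from
        FreeMonoid.lift_eval_of _ _]
      funext i j
      have hb : ((bv n (ltr n a)) : ℕ) = n+1-a := by
        simp only [bv, ltr]; omega
      show Lm (bv n (ltr n a)) i j = SegF n a (0+1) i j
      simp only [Lm, SegF, hb]
      split_ifs <;> first | rfl | (exfalso; omega)
    · have hrec := ih a hpos (by omega)
      have hconcat : asc n a (len+1) = asc n a len ++ [ltr n (a+len)] := by
        simp only [asc, List.range'_concat' a len, List.map_append, List.map_cons, List.map_nil]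
      rw [hconcat, FreeMonoid.ofList_append, map_mul, FreeMonoid.ofList_singleton]
      show ((ψ n (FreeMonoid.ofList (asc n a len))) * (ψ n (FreeMonoid.of (ltr n (a+len))))).f = _
      rw [show ψ n (FreeMonoid.of (ltr n (a+len))) = ⟨Lm (bv n (ltr n (a+len)))⟩ from
        FreeMonoid.lift_eval_of _ _]
      have : (ψ n (FreeMonoid.ofList (asc n a len))) =
          (⟨SegF n a len⟩ : TM (n+3)) := by
        apply TM.ext'; exact hrec
      rw [this, TM.mul_Lm _ (good_SegF n a len)]
      funext i j
      have hb : ((bv n (ltr n (a+len))) : ℕ) = n+1-a-len := by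
        simp only [bv, ltr]; omega
      simp only [TM.step, SegF, hb]
      split_ifs <;> first | rfl | (exfalso; omega) | decide

/-- the matrix of the full ascending word `0 1 ⋯ (n+1)`. -/
def CT : TM (n+3) := ψ n (FreeMonoid.ofList (asc n 0 (n+2)))

/-- the matrix of the ascending word `1 2 ⋯ (n+1)`. -/
def DT : TM (n+3) := ψ n (FreeMonoid.ofList (asc n 1 (n+1)))

lemma CT_f : (CT n).f = SegF n 0 (n+2) := psi_asc n (n+2) 0 (by omega) (by omega)

lemma DT_f : (DT n).f = SegF n 1 (n+1) := psi_asc n (n+1) 1 (by omega) (by omega)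

lemma pow_CT : ∀ r : ℕ, ((CT n)^(r+1)).f =
    fun i j : Fin (n+3) => if (i:ℕ) ≤ j then (((min (r+1) ((j:ℕ)-(i:ℕ))) : ℕ) : V) else ⊥ := by
  intro r
  induction r with
  | zero =>
    rw [pow_one, CT_f]
    funext i j
    simp only [SegF]
    split_ifs with h1 h2 <;> first | (exfalso; omega) | skip
    · have : min 1 ((j:ℕ)-(i:ℕ)) = 1 := by omega
      rw [this]; norm_cast
    · have : min 1 ((j:ℕ)-(i:ℕ)) = 0 := by omega
      rw [this]; norm_cast
    · rfl
  | succ r ih =>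
    funext i j
    rw [pow_succ, TM.mul_f, ih, CT_f]
    apply le_antisymm
    · refine Finset.sup_le fun k _ => ?_
      simp only [SegF]
      split_ifs <;>
        first
        | (exfalso; omega)
        | (simp only [WithBot.add_bot, WithBot.bot_add]; exact bot_le)
        | exact bot_le
        | (norm_cast; omega)
    · by_cases hij : (i:ℕ) ≤ j
      · rw [if_pos hij]
        rcases Nat.eq_or_lt_of_le hij with heq | hlt
        · refine le_trans ?_ (Finset.le_sup (Finset.mem_univ j))
          simp only [SegF]
          split_ifs <;>
            first
            | (exfalso; omega)
            | (norm_cast; omega)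
        · obtain ⟨k, hk⟩ : ∃ k : Fin (n+3), (k:ℕ) = (j:ℕ)-1 := ⟨⟨(j:ℕ)-1, by omega⟩, rfl⟩
          refine le_trans ?_ (Finset.le_sup (Finset.mem_univ k))
          simp only [SegF]
          split_ifs <;>
            first
            | (exfalso; omega)
            | (norm_cast; omega)
      · rw [if_neg hij]; exact bot_le

end Styl16

section Styl16b

open TM

/-- closed form of the matrix of the word `1 2 ⋯ (n+1) 0`. -/
def BF (n : ℕ) : Fin (n+3) → Fin (n+3) → V := fun i j =>
  if (j:ℕ) ≤ n+1 then
    (if (i:ℕ) ≤ j then (if (i:ℕ) < j ∧ (i:ℕ) ≤ n then 1 else 0) else ⊥)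
  else (if (i:ℕ) ≤ n then 2 else if (i:ℕ) = n+1 then 1 else 0)

/-- matrix of the word `1 2 ⋯ (n+1) 0`. -/
def BT (n : ℕ) : TM (n+3) := DT n * ψ n (FreeMonoid.of (0 : Fin (n+2)))

lemma BT_f (n : ℕ) : (BT n).f = BF n := by
  rw [BT, show ψ n (FreeMonoid.of (0 : Fin (n+2))) = ⟨Lm (bv n 0)⟩ from
    FreeMonoid.lift_eval_of _ _]
  rw [show DT n = (⟨SegF n 1 (n+1)⟩ : TM (n+3)) from TM.ext' (DT_f n)]
  rw [TM.mul_Lm _ (good_SegF n 1 (n+1))]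
  funext i j
  have hb : ((bv n (0 : Fin (n+2))) : ℕ) = n+1 := by simp [bv]
  simp only [TM.step, SegF, BF, hb]
  split_ifs <;> first | rfl | (exfalso; omega) | decide

lemma Yval (n : ℕ) : ((CT n)^n * BT n).f 0 ⟨n+2, by omega⟩ = ((n+2 : ℕ) : V) := by
  cases n with
  | zero =>
    rw [pow_zero, one_mul, BT_f]
    decide
  | succ r =>
    rw [TM.mul_f, BT_f (r+1), pow_CT (r+1) r]
    have ej : ((⟨r+1+2, by omega⟩ : Fin (r+1+3)) : ℕ) = r+3 := rfl
    apply le_antisymm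
    · refine Finset.sup_le fun k _ => ?_
      simp only [BF, ej, Fin.val_zero, Nat.zero_le, ↓reduceIte]
      split_ifs <;>
        first
        | (exfalso; omega)
        | (simp only [WithBot.add_bot, WithBot.bot_add]; exact bot_le)
        | exact bot_le
        | (norm_cast; omega)
    · obtain ⟨k, hk⟩ : ∃ k : Fin (r+1+3), (k:ℕ) = r+1 := ⟨⟨r+1, by omega⟩, rfl⟩
      refine le_trans ?_ (Finset.le_sup (Finset.mem_univ k))
      simp only [BF, ej, Fin.val_zero, Nat.zero_le, ↓reduceIte]
      split_ifs <;>
        first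
        | (exfalso; omega)
        | (norm_cast; omega)

lemma psi_rel (n : ℕ) : ∀ u v, StylRel (n+2) u v → ψ n u = ψ n v := by
  have bvlt : ∀ x y : Fin (n+2), x < y → ((bv n y : ℕ) < (bv n x : ℕ)) := by
    intro x y h
    have := y.isLt
    simp only [bv]
    have : (x:ℕ) < y := h
    omega
  have bvle : ∀ x y : Fin (n+2), x ≤ y → ((bv n y : ℕ) ≤ (bv n x : ℕ)) := by
    intro x y h
    simp only [bv]
    have : (x:ℕ) ≤ y := h
    omega
  intro u v h
  cases h with
  | knuth₁ a b c hab hbc =>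
    simp only [map_mul, ψ, FreeMonoid.lift_eval_of]
    rw [show ((⟨Lm (bv n a)⟩ : TM (n+3)) * ⟨Lm (bv n c)⟩) = ⟨TM.step (Lm (bv n a)) (bv n c)⟩ from
      TM.ext' (TM.mul_Lm _ (TM.good_Lm _) _)]
    rw [show ((⟨Lm (bv n c)⟩ : TM (n+3)) * ⟨Lm (bv n a)⟩) = ⟨TM.step (Lm (bv n c)) (bv n a)⟩ from
      TM.ext' (TM.mul_Lm _ (TM.good_Lm _) _)]
    rw [show ((⟨TM.step (Lm (bv n a)) (bv n c)⟩ : TM (n+3)) * ⟨Lm (bv n b)⟩)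
        = ⟨TM.step (TM.step (Lm (bv n a)) (bv n c)) (bv n b)⟩ from
      TM.ext' (TM.mul_Lm _ (TM.good_step (TM.good_Lm _) _) _)]
    rw [show ((⟨TM.step (Lm (bv n c)) (bv n a)⟩ : TM (n+3)) * ⟨Lm (bv n b)⟩)
        = ⟨TM.step (TM.step (Lm (bv n c)) (bv n a)) (bv n b)⟩ from
      TM.ext' (TM.mul_Lm _ (TM.good_step (TM.good_Lm _) _) _)]
    exact congrArg TM.mk (TM.key1 (bv n a) (bv n b) (bv n c) (bvlt b c hbc) (bvle a b hab))
  | knuth₂ a b c hab hbc =>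
    simp only [map_mul, ψ, FreeMonoid.lift_eval_of]
    rw [show ((⟨Lm (bv n b)⟩ : TM (n+3)) * ⟨Lm (bv n a)⟩) = ⟨TM.step (Lm (bv n b)) (bv n a)⟩ from
      TM.ext' (TM.mul_Lm _ (TM.good_Lm _) _)]
    rw [show ((⟨Lm (bv n b)⟩ : TM (n+3)) * ⟨Lm (bv n c)⟩) = ⟨TM.step (Lm (bv n b)) (bv n c)⟩ from
      TM.ext' (TM.mul_Lm _ (TM.good_Lm _) _)]
    rw [show ((⟨TM.step (Lm (bv n b)) (bv n a)⟩ : TM (n+3)) * ⟨Lm (bv n c)⟩)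
        = ⟨TM.step (TM.step (Lm (bv n b)) (bv n a)) (bv n c)⟩ from
      TM.ext' (TM.mul_Lm _ (TM.good_step (TM.good_Lm _) _) _)]
    rw [show ((⟨TM.step (Lm (bv n b)) (bv n c)⟩ : TM (n+3)) * ⟨Lm (bv n a)⟩)
        = ⟨TM.step (TM.step (Lm (bv n b)) (bv n c)) (bv n a)⟩ from
      TM.ext' (TM.mul_Lm _ (TM.good_step (TM.good_Lm _) _) _)]
    exact congrArg TM.mk (TM.key2 (bv n a) (bv n b) (bv n c) (bvle b c hbc) (bvlt a b hab))
  | idem a =>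
    simp only [map_mul, ψ, FreeMonoid.lift_eval_of]
    rw [show ((⟨Lm (bv n a)⟩ : TM (n+3)) * ⟨Lm (bv n a)⟩) = ⟨TM.step (Lm (bv n a)) (bv n a)⟩ from
      TM.ext' (TM.mul_Lm _ (TM.good_Lm _) _)]
    exact congrArg TM.mk (TM.key_idem (bv n a))

/-- `styl_{n+2}` does not satisfy the identity `(xy)^{n+1} ≈ (xy)^n yx`. -/
theorem styl_not_satisfies_rps_identity (n : ℕ) :
    ∃ φ : FreeMonoid (Fin 2) →* Styl (n + 2),
      φ ((FreeMonoid.of 0 * FreeMonoid.of 1) ^ (n + 1)) ≠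
      φ ((FreeMonoid.of 0 * FreeMonoid.of 1) ^ n * (FreeMonoid.of 1 * FreeMonoid.of 0)) := by
  classical
  set q : FreeMonoid (Fin (n+2)) := FreeMonoid.ofList (asc n 1 (n+1)) with hq
  set φ0 : FreeMonoid (Fin 2) →* FreeMonoid (Fin (n+2)) :=
    FreeMonoid.lift (fun t => if t = 0 then FreeMonoid.of (0 : Fin (n+2)) else q) with hφ0
  refine ⟨(Con.mk' (stylCon (n+2))).comp φ0, fun hEq => ?_⟩
  simp only [MonoidHom.comp_apply] at hEq
  have hcon := (Con.ker_rel _).mpr hEq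
  rw [Con.mk'_ker] at hcon
  have hle : stylCon (n+2) ≤ Con.ker (ψ n) :=
    (Con.conGen_le).mpr fun x y h => (Con.ker_rel _).mpr (psi_rel n x y h)
  have hψ := (Con.ker_rel _).mp (hle hcon)
  have hx : φ0 (FreeMonoid.of 0) = FreeMonoid.of (0 : Fin (n+2)) := by
    rw [hφ0, FreeMonoid.lift_eval_of]; simp
  have hy : φ0 (FreeMonoid.of 1) = q := by
    rw [hφ0, FreeMonoid.lift_eval_of]; simp
  have hlist : asc n 0 (n+2) = (0 : Fin (n+2)) :: asc n 1 (n+1) := by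
    simp only [asc]
    have hr : List.range' 0 (n+2) = 0 :: List.range' 1 (n+1) := List.range'_succ (s := 0) (n := n+1) (step := 1)
    rw [hr]
    simp only [List.map_cons]
    congr 1
  have hCT : ψ n (φ0 (FreeMonoid.of 0 * FreeMonoid.of 1)) = CT n := by
    rw [map_mul, hx, hy, hq, CT, hlist, FreeMonoid.ofList_cons, map_mul]
  have h1 : ψ n (φ0 ((FreeMonoid.of 0 * FreeMonoid.of 1) ^ (n+1))) = (CT n)^(n+1) := by
    rw [map_pow, map_pow, hCT]
  have h2 : ψ n (φ0 ((FreeMonoid.of 0 * FreeMonoid.of 1) ^ n * (FreeMonoid.of 1 * FreeMonoid.of 0)))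
      = (CT n)^n * BT n := by
    rw [map_mul, map_mul, map_pow, map_pow, hCT, map_mul, map_mul, hx, hy, hq, BT, DT]
  rw [h1, h2] at hψ
  have hent := congrFun (congrFun (congrArg TM.f hψ) 0) ⟨n+2, by omega⟩
  rw [Yval n, pow_CT n n] at hent
  have ej : ((⟨n+2, by omega⟩ : Fin (n+3)) : ℕ) = n+2 := rfl
  simp only [ej, Fin.val_zero] at hent
  simp only [Nat.zero_le, ↓reduceIte] at hent
  have : min (n+1) (n+2-0) = (n+2 : ℕ) := by exact_mod_cast hent
  omega

end Styl16b
end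

section
/- Let n ≥ 1. For every word w over 𝒜_n, ρ_n(w^*) = (ρ_n(w))^⋆, where w^* is the word obtained by reversing w and replacing each letter a by n+1−a, and ⋆ is the skew transposition on (n+1)×(n+1) tropical matrices. Consequently, the faithful representation ϱ_n : styl_n → U_{n+1}(𝕋) intertwines the involution * on styl_n induced by the order-reversing permutation of 𝒜_n with the skew transposition ⋆ on U_{n+1}(𝕋). -/
section Helpers

lemma trop_sup_add_right {ι : Type*} (s : Finset ι) (f : ι → Trop) (c : Trop) :
    s.sup f + c = s.sup (fun k => f k + c) := by
  rcases s.eq_empty_or_nonempty with h | h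
  · subst h; simp
  · obtain ⟨k0, hk0, hsup⟩ := Finset.exists_mem_eq_sup s h f
    apply le_antisymm
    · rw [hsup]; exact Finset.le_sup (f := fun k => f k + c) hk0
    · exact Finset.sup_le fun k hk => add_le_add_left (Finset.le_sup (f := f) hk) c

lemma trop_sup_add_left {ι : Type*} (s : Finset ι) (f : ι → Trop) (c : Trop) :
    c + s.sup f = s.sup (fun k => c + f k) := by
  rcases s.eq_empty_or_nonempty with h | h
  · subst h; simp
  · obtain ⟨k0, hk0, hsup⟩ := Finset.exists_mem_eq_sup s h f
    apply le_antisymm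
    · rw [hsup]; exact Finset.le_sup (f := fun k => c + f k) hk0
    · exact Finset.sup_le fun k hk => add_le_add_right (Finset.le_sup (f := f) hk) c

lemma tmul_assoc {m : ℕ} (A B C : Matrix (Fin m) (Fin m) Trop) :
    tmul (tmul A B) C = tmul A (tmul B C) := by
  funext i j
  simp only [tmul, trop_sup_add_right, trop_sup_add_left]
  rw [Finset.sup_comm]
  simp [add_assoc]

lemma tmul_id_left {m : ℕ} (A : Matrix (Fin m) (Fin m) Trop) : tmul (tropId m) A = A := by
  funext i j
  simp only [tmul, tropId]
  apply le_antisymm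
  · apply Finset.sup_le
    intro k _
    by_cases h : i = k
    · subst h; simp
    · simp [h]
  · have := Finset.le_sup (f := fun k => (if i = k then (0:Trop) else ⊥) + A k j)
      (Finset.mem_univ i)
    simpa using this

lemma tmul_id_right {m : ℕ} (A : Matrix (Fin m) (Fin m) Trop) : tmul A (tropId m) = A := by
  funext i j
  simp only [tmul, tropId]
  apply le_antisymm
  · apply Finset.sup_le
    intro k _
    by_cases h : k = j
    · subst h; simp
    · simp [h]
  · have := Finset.le_sup (f := fun k => A i k + (if k = j then (0:Trop) else ⊥))
      (Finset.mem_univ j)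
    simpa using this

lemma rhoList_append {n : ℕ} (u v : List (Fin n)) :
    rhoList (u ++ v) = tmul (rhoList u) (rhoList v) := by
  induction u with
  | nil => simp [rhoList, tmul_id_left]
  | cons x xs ih => simp [rhoList, ih, tmul_assoc]

lemma skewT_tmul {m : ℕ} (A B : Matrix (Fin (m + 1)) (Fin (m + 1)) Trop) :
    skewT (tmul A B) = tmul (skewT B) (skewT A) := by
  funext i j
  simp only [skewT, tmul]
  apply le_antisymm
  · apply Finset.sup_le fun k _ => ?_
    have := Finset.le_sup (f := fun l => B ⟨m - l.val, by omega⟩ ⟨m - i.val, by omega⟩ +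
        A ⟨m - j.val, by omega⟩ ⟨m - l.val, by omega⟩)
      (Finset.mem_univ (⟨m - k.val, by omega⟩ : Fin (m + 1)))
    have hk : (⟨m - (m - k.val), by omega⟩ : Fin (m + 1)) = k := by
      ext; simp; omega
    dsimp only at this
    rw [hk] at this
    calc A ⟨m - j.val, by omega⟩ k + B k ⟨m - i.val, by omega⟩
        = B k ⟨m - i.val, by omega⟩ + A ⟨m - j.val, by omega⟩ k := add_comm _ _
      _ ≤ _ := this
  · apply Finset.sup_le fun k _ => ?_
    have := Finset.le_sup (f := fun l => A ⟨m - j.val, by omega⟩ l + B l ⟨m - i.val, by omega⟩)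
      (Finset.mem_univ (⟨m - k.val, by omega⟩ : Fin (m + 1)))
    calc B ⟨m - k.val, by omega⟩ ⟨m - i.val, by omega⟩ +
          A ⟨m - j.val, by omega⟩ ⟨m - k.val, by omega⟩
        = A ⟨m - j.val, by omega⟩ ⟨m - k.val, by omega⟩ +
          B ⟨m - k.val, by omega⟩ ⟨m - i.val, by omega⟩ := add_comm _ _
      _ ≤ _ := this

lemma skewT_tropId {m : ℕ} : skewT (tropId (m + 1)) = tropId (m + 1) := by
  funext i j
  simp only [skewT, tropId]
  have hi := i.isLt; have hj := j.isLt
  by_cases h : i = j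
  · subst h; simp
  · rw [if_neg h, if_neg]
    intro hc
    apply h
    have : m - j.val = m - i.val := congrArg Fin.val hc
    ext; omega

lemma skewT_letterMat {n : ℕ} (x : Fin n) :
    skewT (letterMat x) = letterMat ⟨n - 1 - x.val, by have := x.isLt; omega⟩ := by
  funext i j
  simp only [skewT, letterMat, bar]
  have hi := i.isLt; have hj := j.isLt; have hx := x.isLt
  have h1 : ((⟨n - j.val, by omega⟩ : Fin (n + 1)) = ⟨n - i.val, by omega⟩) ↔ i = j := by
    constructor
    · intro hc; have : n - j.val = n - i.val := congrArg Fin.val hc; ext; omega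
    · intro hc; subst hc; rfl
  have h2 : ((⟨n - j.val, by omega⟩ : Fin (n + 1)) ≤ ⟨n - 1 - x.val, by omega⟩ ∧
      (⟨n - 1 - x.val, by omega⟩ : Fin (n + 1)) < ⟨n - i.val, by omega⟩) ↔
      (i ≤ (⟨n - 1 - (n - 1 - x.val), by omega⟩ : Fin (n + 1)) ∧
      (⟨n - 1 - (n - 1 - x.val), by omega⟩ : Fin (n + 1)) < j) := by
    simp only [Fin.le_def, Fin.lt_def]
    omega
  by_cases h : i = j
  · subst h; simp [h1.mpr rfl]
  · rw [if_neg (fun hc => h (h1.mp hc)), if_neg h]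
    by_cases h' : (⟨n - j.val, by omega⟩ : Fin (n + 1)) ≤ ⟨n - 1 - x.val, by omega⟩ ∧
        (⟨n - 1 - x.val, by omega⟩ : Fin (n + 1)) < ⟨n - i.val, by omega⟩
    · exact (if_pos h').trans (if_pos (h2.mp h')).symm
    · exact (if_neg h').trans (if_neg (fun hc => h' (h2.mpr hc))).symm

end Helpers

/-- `ρ_n(w^*) = (ρ_n(w))^⋆`: the representation intertwines the involution on
words (reverse and complement letters) with skew transposition of tropical matrices. -/
theorem rho_wordStar_eq_skewT (n : ℕ) (hn : 1 ≤ n) (w : List (Fin n)) :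
    rhoList (wordStar w) = skewT (rhoList w) := by
  induction w with
  | nil => simp [wordStar, rhoList, skewT_tropId]
  | cons x xs ih =>
    have hstar : wordStar (x :: xs) = wordStar xs ++
        [⟨n - 1 - x.val, by have := x.isLt; omega⟩] := by
      simp [wordStar]
    rw [hstar, rhoList_append, ih]
    show _ = skewT (tmul (letterMat x) (rhoList xs))
    rw [skewT_tmul, skewT_letterMat]
    simp [rhoList, tmul_id_right]
end

section
/- For every n ≥ 2 and every word w over 𝒜_n, the relation w^* w^{n−1} ≡_styl w^* w^n holds, where w^* is the word obtained by reversing w and replacing each letter a by n+1−a. In other words, the stylic monoid with involution (styl_n, *) satisfies the involution identity x^* x^{n−1} ≈ x^* x^n. -/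
section StylAux

open List FreeMonoid

variable {n : ℕ}

/-- Insert a letter into a strictly decreasing column: if the letter is greater than the
head, it replaces the head (its predecessor); if equal, nothing changes; otherwise recurse. -/
def stp : List (Fin n) → Fin n → List (Fin n)
  | [], a => [a]
  | u :: d, a => if u < a then a :: d else if u = a then u :: d else u :: stp d a

lemma stp_subset {d : List (Fin n)} {a x : Fin n} (h : x ∈ stp d a) : x = a ∨ x ∈ d := by
  induction d with
  | nil => simp [stp] at h; tauto
  | cons u d ih =>
    simp only [stp] at h
    split_ifs at h with h1 h2
    · rcases List.mem_cons.1 h with h | h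
      · exact Or.inl h
      · exact Or.inr (List.mem_cons_of_mem _ h)
    · exact Or.inr h
    · rcases List.mem_cons.1 h with h | h
      · exact Or.inr (h ▸ List.mem_cons_self)
      · rcases ih h with h | h
        · exact Or.inl h
        · exact Or.inr (List.mem_cons_of_mem _ h)

lemma stp_sorted {d : List (Fin n)} (hd : List.Pairwise (· > ·) d) (a : Fin n) :
    List.Pairwise (· > ·) (stp d a) := by
  induction d with
  | nil => simp [stp]
  | cons u d ih =>
    rw [List.pairwise_cons] at hd
    simp only [stp]
    split_ifs with h1 h2
    · exact List.pairwise_cons.2 ⟨fun b hb => lt_trans (hd.1 b hb) h1, hd.2⟩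
    · exact List.pairwise_cons.2 hd
    · refine List.pairwise_cons.2 ⟨fun b hb => ?_, ih hd.2⟩
      rcases stp_subset hb with rfl | hb
      · exact lt_of_le_of_ne (le_of_not_gt h1) (Ne.symm h2)
      · exact hd.1 b hb

lemma mem_stp_self (d : List (Fin n)) (a : Fin n) : a ∈ stp d a := by
  induction d with
  | nil => simp [stp]
  | cons u d ih =>
    simp only [stp]
    split_ifs with h1 h2
    · exact List.mem_cons_self
    · exact h2 ▸ List.mem_cons_self
    · exact List.mem_cons_of_mem _ ih

lemma stp_mem_eq {d : List (Fin n)} (hd : List.Pairwise (· > ·) d) {a : Fin n} (ha : a ∈ d) :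
    stp d a = d := by
  induction d with
  | nil => simp at ha
  | cons u d ih =>
    rw [List.pairwise_cons] at hd
    rcases List.mem_cons.1 ha with rfl | ha
    · simp [stp]
    · have : ¬ u < a := not_lt.2 (le_of_lt (hd.1 a ha))
      simp only [stp, if_neg this]
      split_ifs with h2
      · rfl
      · rw [ih hd.2 ha]

lemma mem_stp_of {d : List (Fin n)} (hd : List.Pairwise (· > ·) d) {x b : Fin n}
    (hx : x ∈ d) (hb : b ≤ x ∨ b ∈ d) : x ∈ stp d b := by
  rcases hb with hb | hb
  · induction d with
    | nil => simp at hx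
    | cons u d ih =>
      rw [List.pairwise_cons] at hd
      simp only [stp]
      split_ifs with h1 h2
      · -- u < b ≤ x, but x ∈ u :: d contradicts sortedness unless x = u
        rcases List.mem_cons.1 hx with rfl | hx
        · exact absurd (lt_of_lt_of_le h1 hb) (lt_irrefl x)
        · exact absurd (lt_of_lt_of_le (lt_trans (hd.1 x hx) h1) hb) (lt_irrefl x)
      · exact hx
      · rcases List.mem_cons.1 hx with rfl | hx
        · exact List.mem_cons_self
        · exact List.mem_cons_of_mem _ (ih hd.2 hx)
  · rw [stp_mem_eq hd hb]; exact hx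


/-! ### Congruence lemmas -/

lemma crel {x y : FreeMonoid (Fin n)} (h : StylRel n x y) : stylCon n x y :=
  ConGen.Rel.of x y h

lemma cmul_left (z : FreeMonoid (Fin n)) {x y : FreeMonoid (Fin n)} (h : stylCon n x y) :
    stylCon n (z * x) (z * y) :=
  (stylCon n).mul ((stylCon n).refl z) h

lemma cmul_right (z : FreeMonoid (Fin n)) {x y : FreeMonoid (Fin n)} (h : stylCon n x y) :
    stylCon n (x * z) (y * z) :=
  (stylCon n).mul h ((stylCon n).refl z)

/-- Apply a rewriting of three consecutive letters in context. -/
lemma swap_mid (pre post : List (Fin n)) {x y z x' y' z' : Fin n}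
    (h : stylCon n (of x * of y * of z) (of x' * of y' * of z')) :
    stylCon n (ofList (pre ++ x :: y :: z :: post)) (ofList (pre ++ x' :: y' :: z' :: post)) := by
  have e : ∀ (a b c : Fin n), pre ++ a :: b :: c :: post = (pre ++ [a, b, c]) ++ post := by
    intro a b c; simp
  rw [e x y z, e x' y' z', ofList_append (pre ++ [x, y, z]) post,
    ofList_append (pre ++ [x', y', z']) post, ofList_append pre, ofList_append pre]
  exact cmul_right _ (cmul_left _ h)

/-- Apply the idempotent relation in context. -/
lemma idem_mid (pre post : List (Fin n)) (a : Fin n) :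
    stylCon n (ofList (pre ++ a :: a :: post)) (ofList (pre ++ a :: post)) := by
  have e1 : pre ++ a :: a :: post = (pre ++ [a, a]) ++ post := by simp
  have e2 : pre ++ a :: post = (pre ++ [a]) ++ post := by simp
  rw [e1, e2, ofList_append (pre ++ [a, a]) post, ofList_append (pre ++ [a]) post,
    ofList_append pre, ofList_append pre]
  exact cmul_right _ (cmul_left _ (crel (StylRel.idem a)))

/-- Move a letter `a ≥ p` leftwards over a block of letters `< p` that follows `p`. -/
lemma styl_s1 (L : List (Fin n)) (p a : Fin n) (hL : ∀ x ∈ L, x < p)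
    (hs : List.Pairwise (· > ·) L) (hpa : p ≤ a) :
    stylCon n (ofList (p :: (L ++ [a]))) (ofList (p :: a :: L)) := by
  induction L generalizing p with
  | nil => exact (stylCon n).refl _
  | cons l L ih =>
    rw [List.pairwise_cons] at hs
    have h1 : stylCon n (ofList (l :: (L ++ [a]))) (ofList (l :: a :: L)) :=
      ih l hs.1 hs.2 (le_of_lt (lt_of_lt_of_le (hL l (List.mem_cons_self)) hpa))
    have h2 : stylCon n (ofList (p :: l :: (L ++ [a]))) (ofList (p :: l :: a :: L)) := by
      rw [ofList_cons, ofList_cons, ofList_cons p (l :: a :: L)]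
      exact cmul_left _ h1
    refine (stylCon n).trans h2 ?_
    -- swap (p, l, a) → (p, a, l) using knuth₂ with (a, b, c) := (l, p, a)
    have hknuth : stylCon n (of p * of l * of a) (of p * of a * of l) :=
      crel (StylRel.knuth₂ l p a (hL l (List.mem_cons_self)) hpa)
    exact swap_mid [] L hknuth

/-- Move a letter `p` leftwards over a block `U` of letters `> x ≥ p` when followed by `x`. -/
lemma styl_s2 (U : List (Fin n)) (p x : Fin n) (hU : ∀ u ∈ U, x < u)
    (hs : List.Pairwise (· > ·) U) (hpx : p ≤ x) :
    stylCon n (ofList (U ++ [p, x])) (ofList (p :: (U ++ [x]))) := by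
  induction U with
  | nil => exact (stylCon n).refl _
  | cons u U ih =>
    rw [List.pairwise_cons] at hs
    have hxu : x < u := hU u (List.mem_cons_self)
    have h1 : stylCon n (ofList (u :: (U ++ [p, x]))) (ofList (u :: p :: (U ++ [x]))) := by
      rw [ofList_cons, ofList_cons]
      exact cmul_left _ (ih (fun v hv => hU v (List.mem_cons_of_mem _ hv)) hs.2)
    refine (stylCon n).trans h1 ?_
    cases U with
    | nil =>
      have hknuth : stylCon n (of p * of u * of x) (of u * of p * of x) :=
        crel (StylRel.knuth₁ p x u hpx hxu)
      exact swap_mid [] [] ((stylCon n).symm hknuth)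
    | cons u' U' =>
      have hu' : x < u' := hU u' (List.mem_cons_of_mem _ (List.mem_cons_self))
      have hknuth : stylCon n (of p * of u * of u') (of u * of p * of u') :=
        crel (StylRel.knuth₁ p u' u (le_of_lt (lt_of_le_of_lt hpx hu'))
          (hs.1 u' (List.mem_cons_self)))
      exact swap_mid [] (U' ++ [x]) ((stylCon n).symm hknuth)

/-- A strictly decreasing column absorbs any of its letters on the right. -/
lemma styl_absorb {d : List (Fin n)} (hd : List.Pairwise (· > ·) d) {a : Fin n} (ha : a ∈ d) :
    stylCon n (ofList (d ++ [a])) (ofList d) := by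
  induction d with
  | nil => simp at ha
  | cons x d ih =>
    rw [List.pairwise_cons] at hd
    rcases List.mem_cons.1 ha with rfl | ha
    · have h1 : stylCon n (ofList (a :: (d ++ [a]))) (ofList (a :: a :: d)) :=
        styl_s1 d a a hd.1 hd.2 le_rfl
      exact (stylCon n).trans h1 (idem_mid [] d a)
    · have h1 : stylCon n (ofList (d ++ [a])) (ofList d) := ih hd.2 ha
      rw [show x :: d ++ [a] = x :: (d ++ [a]) by simp, ofList_cons, ofList_cons]
      exact cmul_left _ h1


/-- Case analysis for insertion into a sorted column. -/
lemma stp_cases (d : List (Fin n)) (a : Fin n) (hd : List.Pairwise (· > ·) d) :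
    (a ∈ d ∧ stp d a = d) ∨
    ((∀ u ∈ d, a < u) ∧ stp d a = d ++ [a]) ∨
    (∃ U p L, d = U ++ p :: L ∧ stp d a = U ++ a :: L ∧
      (∀ u ∈ U, a < u) ∧ List.Pairwise (· > ·) U ∧ p < a ∧ (∀ x ∈ L, x < p)) := by
  induction d with
  | nil => exact Or.inr (Or.inl ⟨by simp, by simp [stp]⟩)
  | cons u d ih =>
    rw [List.pairwise_cons] at hd
    by_cases h1 : u < a
    · refine Or.inr (Or.inr ⟨[], u, d, by simp, ?_, by simp, by simp, h1, hd.1⟩)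
      simp [stp, h1]
    · by_cases h2 : u = a
      · exact Or.inl ⟨h2 ▸ List.mem_cons_self, stp_mem_eq (List.pairwise_cons.2 hd)
          (h2 ▸ List.mem_cons_self)⟩
      · have hau : a < u := lt_of_le_of_ne (le_of_not_gt h1) fun h => h2 h.symm
        have hstp : stp (u :: d) a = u :: stp d a := by simp [stp, h1, h2]
        rcases ih hd.2 with ⟨hm, he⟩ | ⟨hall, he⟩ | ⟨U, p, L, hdec, he, hU, hUs, hpa, hL⟩
        · exact Or.inl ⟨List.mem_cons_of_mem _ hm, by rw [hstp, he]⟩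
        · refine Or.inr (Or.inl ⟨?_, by rw [hstp, he]; simp⟩)
          intro v hv
          rcases List.mem_cons.1 hv with rfl | hv
          · exact hau
          · exact hall v hv
        · refine Or.inr (Or.inr ⟨u :: U, p, L, by rw [hdec]; simp, ?_, ?_, ?_, hpa, hL⟩)
          · rw [hstp, he]; simp
          · intro v hv
            rcases List.mem_cons.1 hv with rfl | hv
            · exact hau
            · exact hU v hv
          · refine List.pairwise_cons.2 ⟨fun b hb => ?_, hUs⟩
            exact hd.1 b (by rw [hdec]; exact List.mem_append_left _ hb)

/-- The key insertion step at the level of the congruence. -/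
lemma stp_rel (d : List (Fin n)) (a : Fin n) (hd : List.Pairwise (· > ·) d) :
    ∃ z, stylCon n (ofList (d ++ [a])) (z * ofList (stp d a)) := by
  rcases stp_cases d a hd with ⟨hm, he⟩ | ⟨_, he⟩ | ⟨U, p, L, hdec, he, hU, hUs, hpa, hL⟩
  · exact ⟨1, by rw [he, one_mul]; exact styl_absorb hd hm⟩
  · exact ⟨1, by rw [he, one_mul]; exact (stylCon n).refl _⟩
  · refine ⟨of p, ?_⟩
    subst hdec
    have hsplit : List.Pairwise (· > ·) (p :: L) :=
      hd.sublist (List.sublist_append_right U (p :: L))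
    rw [List.pairwise_cons] at hsplit
    have h1 : stylCon n (ofList (p :: (L ++ [a]))) (ofList (p :: a :: L)) :=
      styl_s1 L p a hsplit.1 hsplit.2 (le_of_lt hpa)
    have h2 : stylCon n (ofList ((U ++ p :: L) ++ [a])) (ofList (U ++ p :: a :: L)) := by
      rw [show (U ++ p :: L) ++ [a] = U ++ (p :: (L ++ [a])) by simp,
        ofList_append, ofList_append]
      exact cmul_left _ h1
    have h3 : stylCon n (ofList (U ++ [p, a])) (ofList (p :: (U ++ [a]))) :=
      styl_s2 U p a hU hUs (le_of_lt hpa)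
    have h4 : stylCon n (ofList (U ++ p :: a :: L)) (ofList ((p :: (U ++ [a])) ++ L)) := by
      rw [show U ++ p :: a :: L = (U ++ [p, a]) ++ L by simp, ofList_append, ofList_append]
      exact cmul_right _ h3
    refine (stylCon n).trans h2 ((stylCon n).trans h4 ?_)
    rw [he, show (p :: (U ++ [a])) ++ L = p :: (U ++ a :: L) by simp, ofList_cons,
      show U ++ a :: L = (U ++ [a]) ++ L by simp]
    exact (stylCon n).refl _

/-- Processing a word letter by letter into the column. -/
lemma proc_rel (v : List (Fin n)) : ∀ (d : List (Fin n)), List.Pairwise (· > ·) d →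
    ∃ z, stylCon n (ofList d * ofList v) (z * ofList (List.foldl stp d v)) := by
  induction v with
  | nil =>
    refine fun d _ => ⟨1, ?_⟩
    rw [show ofList ([] : List (Fin n)) = 1 from rfl, mul_one, one_mul, List.foldl_nil]
    exact (stylCon n).refl _
  | cons a v ih =>
    intro d hd
    obtain ⟨z₁, hz₁⟩ := stp_rel d a hd
    obtain ⟨z₂, hz₂⟩ := ih (stp d a) (stp_sorted hd a)
    refine ⟨z₁ * z₂, ?_⟩
    have e : ofList d * ofList (a :: v) = ofList (d ++ [a]) * ofList v := by
      rw [ofList_append, ofList_cons, mul_assoc]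
      rfl
    rw [e, List.foldl_cons]
    have h1 : stylCon n (ofList (d ++ [a]) * ofList v) (z₁ * ofList (stp d a) * ofList v) :=
      cmul_right _ hz₁
    have h2 : stylCon n (z₁ * ofList (stp d a) * ofList v)
        (z₁ * (z₂ * ofList (List.foldl stp (stp d a) v))) := by
      rw [mul_assoc]
      exact cmul_left _ hz₂
    refine (stylCon n).trans h1 ((stylCon n).trans h2 ?_)
    rw [← mul_assoc]
    exact (stylCon n).refl _

/-- A column absorbs a whole word of its letters. -/
lemma absorb_word (d : List (Fin n)) (hd : List.Pairwise (· > ·) d) (v : List (Fin n))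
    (hv : ∀ a ∈ v, a ∈ d) : stylCon n (ofList d * ofList v) (ofList d) := by
  induction v with
  | nil => rw [show ofList ([] : List (Fin n)) = 1 from rfl, mul_one]; exact (stylCon n).refl _
  | cons a v ih =>
    have h1 : stylCon n (ofList d * ofList (a :: v)) (ofList d * ofList v) := by
      rw [ofList_cons, ← mul_assoc, show ofList d * of a = ofList (d ++ [a]) by
        rw [ofList_append]; rfl]
      exact cmul_right _ (styl_absorb hd (hv a (List.mem_cons_self)))
    exact (stylCon n).trans h1 (ih fun a ha => hv a (List.mem_cons_of_mem _ ha))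


/-! ### The counting invariant -/

/-- Number of letters of `S` above `x`. -/
def cnt (S : Finset (Fin n)) (x : Fin n) : ℕ := (S.filter fun y => x < y).card

/-- After `k` blocks, the top `k` letters of `S` are in the column. -/
def InvTop (S : Finset (Fin n)) (k : ℕ) (d : List (Fin n)) : Prop :=
  ∀ x ∈ S, cnt S x < k → x ∈ d

lemma cnt_lt_of_lt {S : Finset (Fin n)} {x b : Fin n} (hb : b ∈ S) (h : x < b) :
    cnt S b < cnt S x := by
  refine Finset.card_lt_card ⟨fun y hy => ?_, fun hsub => ?_⟩
  · rw [Finset.mem_filter] at hy ⊢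
    exact ⟨hy.1, lt_trans h hy.2⟩
  · have := hsub (Finset.mem_filter.2 ⟨hb, h⟩)
    exact absurd (Finset.mem_filter.1 this).2 (lt_irrefl b)

lemma cnt_lt_card {S : Finset (Fin n)} {x : Fin n} (hx : x ∈ S) : cnt S x < S.card := by
  refine Finset.card_lt_card ⟨Finset.filter_subset _ _, fun hsub => ?_⟩
  have := hsub hx
  exact absurd (Finset.mem_filter.1 this).2 (lt_irrefl x)

lemma cnt_inj {S : Finset (Fin n)} {x y : Fin n} (hx : x ∈ S) (hy : y ∈ S)
    (h : cnt S x = cnt S y) : x = y := by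
  rcases lt_trichotomy x y with hlt | heq | hlt
  · have := cnt_lt_of_lt hy hlt; omega
  · exact heq
  · have := cnt_lt_of_lt hx hlt; omega

lemma invTop_step {S : Finset (Fin n)} {k : ℕ} {d : List (Fin n)}
    (hd : List.Pairwise (· > ·) d) (hI : InvTop S k d) {b : Fin n} (hb : b ∈ S) :
    InvTop S k (stp d b) := by
  intro x hx hcx
  refine mem_stp_of hd (hI x hx hcx) ?_
  rcases le_or_gt b x with h | h
  · exact Or.inl h
  · exact Or.inr (hI b hb (lt_trans (cnt_lt_of_lt hb h) hcx))

lemma invTop_proc {S : Finset (Fin n)} {k : ℕ} {v : List (Fin n)} (hv : ∀ b ∈ v, b ∈ S) :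
    ∀ {d : List (Fin n)}, List.Pairwise (· > ·) d → InvTop S k d →
      InvTop S k (List.foldl stp d v) := by
  induction v with
  | nil => intro d _ hI; exact hI
  | cons a v ih =>
    intro d hd hI
    rw [List.foldl_cons]
    exact ih (fun b hb => hv b (List.mem_cons_of_mem _ hb)) (stp_sorted hd a)
      (invTop_step hd hI (hv a (List.mem_cons_self)))

lemma foldl_sorted {d : List (Fin n)} (hd : List.Pairwise (· > ·) d) (v : List (Fin n)) :
    List.Pairwise (· > ·) (List.foldl stp d v) := by
  induction v generalizing d with
  | nil => exact hd
  | cons a v ih => exact ih (stp_sorted hd a)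

lemma invTop_block {S : Finset (Fin n)} {k : ℕ} {v : List (Fin n)}
    (hv : ∀ b ∈ v, b ∈ S) (hv2 : ∀ s ∈ S, s ∈ v) {d : List (Fin n)}
    (hd : List.Pairwise (· > ·) d) (hI : InvTop S k d) :
    InvTop S (k + 1) (List.foldl stp d v) := by
  by_cases hex : ∃ x₀ ∈ S, cnt S x₀ = k
  · obtain ⟨x₀, hx₀S, hx₀c⟩ := hex
    obtain ⟨v₁, v₂, rfl⟩ := List.append_of_mem (hv2 x₀ hx₀S)
    have hv₁ : ∀ b ∈ v₁, b ∈ S := fun b hb => hv b (List.mem_append_left _ hb)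
    have hv₂ : ∀ b ∈ v₂, b ∈ S := fun b hb =>
      hv b (List.mem_append_right _ (List.mem_cons_of_mem _ hb))
    rw [List.foldl_append, List.foldl_cons]
    set d₁ := List.foldl stp d v₁ with hd₁
    have hd₁s : List.Pairwise (· > ·) d₁ := foldl_sorted hd v₁
    have hI₁ : InvTop S k d₁ := invTop_proc hv₁ hd hI
    have hI₂ : InvTop S (k + 1) (stp d₁ x₀) := by
      intro x hx hcx
      rcases Nat.lt_succ_iff_lt_or_eq.1 hcx with hcx | hcx
      · exact invTop_step hd₁s hI₁ hx₀S x hx hcx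
      · rw [cnt_inj hx hx₀S (hcx.trans hx₀c.symm)]
        exact mem_stp_self d₁ x₀
    exact invTop_proc hv₂ (stp_sorted hd₁s x₀) hI₂
  · push_neg at hex
    have hI' : InvTop S k (List.foldl stp d v) := invTop_proc hv hd hI
    intro x hx hcx
    refine hI' x hx ?_
    rcases Nat.lt_succ_iff_lt_or_eq.1 hcx with hcx | hcx
    · exact hcx
    · exact absurd hcx (hex x hx)

lemma invTop_rep {S : Finset (Fin n)} {Wl : List (Fin n)}
    (hv : ∀ b ∈ Wl, b ∈ S) (hv2 : ∀ s ∈ S, s ∈ Wl) :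
    ∀ (j k : ℕ) {d : List (Fin n)}, List.Pairwise (· > ·) d → InvTop S k d →
      InvTop S (k + j) (List.foldl stp d (List.replicate j Wl).flatten) := by
  intro j
  induction j with
  | zero => intro k d _ hI; simpa using hI
  | succ j ih =>
    intro k d hd hI
    rw [List.replicate_succ, List.flatten_cons, List.foldl_append]
    have := ih (k + 1) (foldl_sorted hd Wl) (invTop_block hv hv2 hd hI)
    rwa [show k + 1 + j = k + (j + 1) by omega] at this


/-! ### Final assembly -/

lemma pow_eq_ofList (w : FreeMonoid (Fin n)) (k : ℕ) :
    w ^ k = ofList (List.replicate k (toList w)).flatten := by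
  induction k with
  | zero => rfl
  | succ k ih =>
    rw [pow_succ', List.replicate_succ, List.flatten_cons, ofList_append, ofList_toList, ih]

lemma main_mem (hn : 2 ≤ n) (Wl : List (Fin n)) :
    ∀ a ∈ Wl, a ∈ List.foldl stp []
      (wordStar Wl ++ (List.replicate (n - 1) Wl).flatten) := by
  intro a ha
  obtain ⟨S, hS⟩ : ∃ S : Finset (Fin n), S = Wl.toFinset := ⟨_, rfl⟩
  have hv : ∀ b ∈ Wl, b ∈ S := fun b hb => hS ▸ List.mem_toFinset.2 hb
  have hv2 : ∀ s ∈ S, s ∈ Wl := fun s hs => List.mem_toFinset.1 (hS ▸ hs)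
  rw [List.foldl_append]
  have hd₀s : List.Pairwise (· > ·) (List.foldl stp [] (wordStar Wl)) :=
    foldl_sorted List.Pairwise.nil _
  have hI0 : InvTop S 0 ([] : List (Fin n)) := fun x _ h0 => absurd h0 (Nat.not_lt_zero _)
  have hcard : S.card ≤ n := le_trans (Finset.card_le_univ S) (by simp)
  by_cases hfull : S.card = n
  · have hSuniv : S = Finset.univ := Finset.eq_univ_of_card S (by simpa using hfull)
    have hb1 : ∀ b ∈ wordStar Wl, b ∈ S := fun b _ => by rw [hSuniv]; exact Finset.mem_univ b
    have hb2 : ∀ s ∈ S, s ∈ wordStar Wl := by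
      intro s _
      have h1 : (⟨n - 1 - s.val, by have := s.isLt; omega⟩ : Fin n) ∈ Wl :=
        hv2 _ (hSuniv.symm ▸ Finset.mem_univ (⟨n - 1 - s.val, by have := s.isLt; omega⟩ : Fin n))
      refine List.mem_map.2 ⟨⟨n - 1 - s.val, by have := s.isLt; omega⟩,
        List.mem_reverse.2 h1, ?_⟩
      have := s.isLt
      ext
      simp only []
      omega
    have hI1 : InvTop S 1 (List.foldl stp [] (wordStar Wl)) :=
      invTop_block hb1 hb2 List.Pairwise.nil hI0
    have hfin := invTop_rep hv hv2 (n - 1) 1 hd₀s hI1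
    exact hfin a (hv a ha) (by have := cnt_lt_card (hv a ha); omega)
  · have hI0' : InvTop S 0 (List.foldl stp [] (wordStar Wl)) :=
      fun x _ h0 => absurd h0 (Nat.not_lt_zero _)
    have hfin := invTop_rep hv hv2 (n - 1) 0 hd₀s hI0'
    exact hfin a (hv a ha) (by have := cnt_lt_card (hv a ha); omega)

end StylAux


/-- For `n ≥ 2`, the stylic monoid with involution satisfies
`x^* x^{n-1} ≈ x^* x^n`: for every word `w`, `w^* w^{n-1} ≡_styl w^* w^n`. -/
theorem styl_involution_identity (n : ℕ) (hn : 2 ≤ n) (w : FreeMonoid (Fin n)) :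
    stylCon n (FreeMonoid.ofList (wordStar (FreeMonoid.toList w)) * w ^ (n - 1))
              (FreeMonoid.ofList (wordStar (FreeMonoid.toList w)) * w ^ n) := by
  classical
  have hpow : w ^ n = w ^ (n - 1) * w := by
    rw [← pow_succ]
    congr 1
    omega
  have hword : FreeMonoid.ofList (wordStar (FreeMonoid.toList w)) * w ^ (n - 1) =
      FreeMonoid.ofList (wordStar (FreeMonoid.toList w) ++
        (List.replicate (n - 1) (FreeMonoid.toList w)).flatten) := by
    rw [FreeMonoid.ofList_append, pow_eq_ofList]
  set Lfull := wordStar (FreeMonoid.toList w) ++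
      (List.replicate (n - 1) (FreeMonoid.toList w)).flatten with hLfull
  set D := List.foldl stp [] Lfull with hD
  have hDs : List.Pairwise (· > ·) D := foldl_sorted List.Pairwise.nil _
  obtain ⟨z, hz⟩ := proc_rel Lfull [] List.Pairwise.nil
  rw [show FreeMonoid.ofList ([] : List (Fin n)) = 1 from rfl, one_mul, ← hD] at hz
  have habs : stylCon n (FreeMonoid.ofList D * w) (FreeMonoid.ofList D) := by
    have h := absorb_word D hDs (FreeMonoid.toList w)
      (by rw [hD, hLfull]; exact main_mem hn (FreeMonoid.toList w))
    rwa [FreeMonoid.ofList_toList] at h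
  have hgoal : stylCon n (FreeMonoid.ofList Lfull * w) (FreeMonoid.ofList Lfull) := by
    refine (stylCon n).trans (cmul_right w hz) ?_
    refine (stylCon n).trans ?_ ((stylCon n).symm hz)
    rw [mul_assoc]
    exact cmul_left z habs
  rw [hpow, ← mul_assoc, hword]
  exact (stylCon n).symm hgoal
end

section
/- For every n ≥ 2, the involution monoid (U_{n+1}(𝕋), ⋆), where ⋆ is skew transposition, does not satisfy the involution identity x^* x^{n−1} ≈ x^* x^n: there exists a matrix M ∈ U_{n+1}(𝕋) such that M^⋆ M^{n−1} ≠ M^⋆ M^n. -/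
def Mw (n : ℕ) : Matrix (Fin (n + 1)) (Fin (n + 1)) Trop :=
  fun i j => if i = j then (0 : Trop)
    else if j.val = i.val + 1 then (if i.val = 0 then (1 : Trop) else 0) else ⊥

lemma sup_pair {m : ℕ} (f : Fin m → Trop) (a b : Fin m)
    (h : ∀ l, l ≠ a → l ≠ b → f l = ⊥) : Finset.univ.sup f = f a ⊔ f b := by
  apply le_antisymm
  · refine Finset.sup_le fun l _ => ?_
    by_cases ha : l = a
    · subst ha; exact le_sup_left
    by_cases hb : l = b
    · subst hb; exact le_sup_right
    · rw [h l ha hb]; exact bot_le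
  · exact sup_le (Finset.le_sup (Finset.mem_univ a)) (Finset.le_sup (Finset.mem_univ b))

lemma tpow_entry (n k : ℕ) (i : Fin (n + 1)) :
    tpow (Mw n) k i ⟨n, by omega⟩ =
      if i.val = n then 0
      else if i.val = 0 then (if n ≤ k then (1 : Trop) else ⊥)
      else if n ≤ i.val + k then 0 else ⊥ := by
  induction k generalizing i with
  | zero =>
    simp only [tpow, tropId]
    have hiv := i.isLt
    rcases eq_or_ne i.val n with h | h
    · have : i = ⟨n, by omega⟩ := Fin.ext h
      rw [if_pos this, if_pos h]
    · have hne : i ≠ ⟨n, by omega⟩ := fun hh => h (congrArg Fin.val hh)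
      rw [if_neg hne, if_neg h]
      split_ifs <;> first | rfl | (exfalso; omega)
  | succ k ih =>
    show Finset.univ.sup (fun l => Mw n i l + tpow (Mw n) k l ⟨n, by omega⟩) = _
    have hiv := i.isLt
    rcases eq_or_ne i.val n with hin | hin
    · have hz : ∀ l : Fin (n+1), l ≠ i → l ≠ i →
          (Mw n i l + tpow (Mw n) k l ⟨n, by omega⟩) = ⊥ := by
        intro l hl _
        have h1 : i ≠ l := fun h => hl h.symm
        have h2 : l.val ≠ i.val + 1 := by have := l.isLt; omega
        simp only [Mw, if_neg h1, if_neg h2, WithBot.bot_add]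
      rw [sup_pair _ i i hz, sup_idem]
      have hMi : Mw n i i = 0 := by simp [Mw]
      rw [hMi, zero_add, ih]
      simp [hin]
    · have hlt : i.val < n := by omega
      set i' : Fin (n+1) := ⟨i.val + 1, by omega⟩ with hi'
      have h2 : i'.val = i.val + 1 := rfl
      have hz : ∀ l : Fin (n+1), l ≠ i → l ≠ i' →
          (Mw n i l + tpow (Mw n) k l ⟨n, by omega⟩) = ⊥ := by
        intro l hl hl'
        have ha : i ≠ l := fun h => hl h.symm
        have hb : l.val ≠ i.val + 1 := fun h => hl' (Fin.ext (by rw [h2, h]))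
        simp only [Mw, if_neg ha, if_neg hb, WithBot.bot_add]
      rw [sup_pair _ i i' hz]
      have hMi : Mw n i i = 0 := by simp [Mw]
      have hineq : i ≠ i' := fun h => by
        have := congrArg Fin.val h; rw [h2] at this; omega
      have hMi' : Mw n i i' = if i.val = 0 then (1 : Trop) else 0 := by
        show (if i = i' then (0:Trop) else _) = _
        rw [if_neg hineq, if_pos h2]
      rw [hMi, hMi', zero_add, ih i, ih i', h2]
      rcases eq_or_ne i.val 0 with h0 | h0 <;>
        split_ifs <;> first | (exfalso; omega) | simp_all

lemma Mw_unitriangular (n : ℕ) : (∀ i, Mw n i i = 0) ∧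
    ∀ i j : Fin (n + 1), j < i → Mw n i j = ⊥ := by
  constructor
  · intro i; simp [Mw]
  · intro i j hji
    have h1 : i ≠ j := (ne_of_lt hji).symm
    have h2 : ¬ (j.val = i.val + 1) := by
      have := (Fin.lt_iff_val_lt_val).mp hji; omega
    simp only [Mw, if_neg h1, if_neg h2]

lemma tmul_entry (n k : ℕ) (hn : 2 ≤ n) :
    tmul (skewT (Mw n)) (tpow (Mw n) k) ⟨0, by omega⟩ ⟨n, by omega⟩ =
      (tpow (Mw n) k ⟨0, by omega⟩ ⟨n, by omega⟩) ⊔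
      (tpow (Mw n) k ⟨1, by omega⟩ ⟨n, by omega⟩) := by
  have hz : ∀ l : Fin (n+1), l ≠ ⟨0, by omega⟩ → l ≠ ⟨1, by omega⟩ →
      (skewT (Mw n) ⟨0, by omega⟩ l + tpow (Mw n) k l ⟨n, by omega⟩) = ⊥ := by
    intro l h0 h1
    have hv0 : l.val ≠ 0 := fun h => h0 (Fin.ext h)
    have hv1 : l.val ≠ 1 := fun h => h1 (Fin.ext h)
    have hl := l.isLt
    have ha : (⟨n - l.val, by omega⟩ : Fin (n+1)) ≠ ⟨n - 0, by omega⟩ := by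
      intro h
      have := congrArg Fin.val h
      simp only at this; omega
    have hb : ¬ ((⟨n - 0, by omega⟩ : Fin (n+1)).val = (n - l.val) + 1) := by
      simp only; omega
    show (Mw n ⟨n - l.val, by omega⟩ ⟨n - 0, by omega⟩ + _) = ⊥
    simp only [Mw, if_neg ha, if_neg hb, WithBot.bot_add]
  rw [show tmul (skewT (Mw n)) (tpow (Mw n) k) ⟨0, by omega⟩ ⟨n, by omega⟩ =
      Finset.univ.sup (fun l => skewT (Mw n) ⟨0, by omega⟩ l + tpow (Mw n) k l ⟨n, by omega⟩) from rfl,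
    sup_pair _ _ _ hz]
  have e0 : skewT (Mw n) ⟨0, by omega⟩ (⟨0, by omega⟩ : Fin (n+1)) = 0 := by
    show Mw n ⟨n - 0, by omega⟩ ⟨n - 0, by omega⟩ = 0
    simp [Mw]
  have e1 : skewT (Mw n) ⟨0, by omega⟩ (⟨1, by omega⟩ : Fin (n+1)) = 0 := by
    show Mw n ⟨n - 1, by omega⟩ ⟨n - 0, by omega⟩ = 0
    have ha : (⟨n - 1, by omega⟩ : Fin (n+1)) ≠ ⟨n - 0, by omega⟩ := by
      intro h; have := congrArg Fin.val h; simp only at this; omega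
    have hb : (⟨n - 0, by omega⟩ : Fin (n+1)).val = (n - 1) + 1 := by
      simp only; omega
    have hc : ¬ ((⟨n - 1, by omega⟩ : Fin (n+1)).val = 0) := by simp only; omega
    simp only [Mw, if_neg ha, if_pos hb, if_neg hc]
  rw [e0, e1, zero_add, zero_add]


/-- For `n ≥ 2`, the involution monoid `(U_{n+1}(𝕋), ⋆)` does not satisfy
`x^* x^{n-1} ≈ x^* x^n`: some upper unitriangular tropical matrix `M` has
`M^⋆ M^{n-1} ≠ M^⋆ M^n`. -/
theorem tropical_not_satisfies_involution_identity (n : ℕ) (hn : 2 ≤ n) :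
    ∃ M : Matrix (Fin (n + 1)) (Fin (n + 1)) Trop, IsUnitriangular M ∧
      tmul (skewT M) (tpow M (n - 1)) ≠ tmul (skewT M) (tpow M n) := by
  refine ⟨Mw n, Mw_unitriangular n, fun h => ?_⟩
  have hEq := congrFun (congrFun h ⟨0, by omega⟩) ⟨n, by omega⟩
  rw [tmul_entry n (n-1) hn, tmul_entry n n hn, tpow_entry, tpow_entry,
    tpow_entry, tpow_entry] at hEq
  simp only [if_neg (by omega : ¬ (0 : ℕ) = n), if_pos rfl,
    if_neg (by omega : ¬ n ≤ n - 1), if_pos (le_refl n),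
    if_neg (by omega : ¬ (1 : ℕ) = n), if_neg (by omega : ¬ (1 : ℕ) = 0),
    if_pos (by omega : n ≤ 1 + (n - 1)), if_pos (by omega : n ≤ 1 + n)] at hEq
  have h01 : (0 : Trop) ≤ 1 := by
    exact_mod_cast (zero_le_one : (0:ℝ) ≤ 1)
  rw [if_true, if_true, bot_sup_eq, sup_eq_left.mpr h01] at hEq
  exact zero_ne_one hEq
end
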